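/- If a finite set P of points in the plane is in general position (no square in any orientation has five or more contact pairs among P), then there are only finitely many empty squares among P having four contact pairs. -/
import Mathlib


open Real Set

/-- The four side labels of a square. -/
inductive SqSide : Type
  | top
  | right
  | bottom
  | left
  deriving DecidableEq

/-- A (solid, closed) square in the plane, given by its center, its radius `r`
(half the side length) and its orientation `θ`. -/
structure Square : Type where
  center : ℝ × ℝ
  r : ℝ
  θ : ℝ

namespace Square

/-- The local `x`-coordinate of a point in the rotated frame of the square. -/
noncomputable def lx (S : Square) (p : ℝ × ℝ) : ℝ :=
  (p.1 - S.center.1) * Real.cos S.θ + (p.2 - S.center.2) * Real.sin S.θ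

/-- The local `y`-coordinate of a point in the rotated frame of the square. -/
noncomputable def ly (S : Square) (p : ℝ × ℝ) : ℝ :=
  -(p.1 - S.center.1) * Real.sin S.θ + (p.2 - S.center.2) * Real.cos S.θ

/-- A valid parametrization: nonnegative radius and orientation in `[0, π/2)`.
Every geometric square (with sides parallel to the directions `θ` and `θ + π/2`
for some `θ`) has such a parametrization, which is unique when `0 < r`. -/
def Valid (S : Square) : Prop :=
  0 ≤ S.r ∧ 0 ≤ S.θ ∧ S.θ < Real.pi / 2

/-- Membership in the closed solid square. -/
def Mem (S : Square) (p : ℝ × ℝ) : Prop :=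
  |S.lx p| ≤ S.r ∧ |S.ly p| ≤ S.r

/-- The square as a subset of the plane. -/
def toSet (S : Square) : Set (ℝ × ℝ) :=
  {p | S.Mem p}

/-- Membership in the interior of the square. -/
def InteriorMem (S : Square) (p : ℝ × ℝ) : Prop :=
  |S.lx p| < S.r ∧ |S.ly p| < S.r

/-- `p` lies on the closed side of `S` labeled `a` (sides include their endpoints). -/
def OnSide (S : Square) (a : SqSide) (p : ℝ × ℝ) : Prop :=
  match a with
  | SqSide.top    => S.ly p = S.r ∧ |S.lx p| ≤ S.r
  | SqSide.bottom => S.ly p = -S.r ∧ |S.lx p| ≤ S.r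
  | SqSide.right  => S.lx p = S.r ∧ |S.ly p| ≤ S.r
  | SqSide.left   => S.lx p = -S.r ∧ |S.ly p| ≤ S.r

/-- `p` lies on the boundary of `S`. -/
def OnBoundary (S : Square) (p : ℝ × ℝ) : Prop :=
  ∃ a : SqSide, S.OnSide a p

/-- `S` is a square in orientation `φ`, i.e. its sides are parallel to the
directions `φ` and `φ + π/2` (orientations are taken modulo `π/2`). -/
def InOrientation (S : Square) (φ : ℝ) : Prop :=
  ∃ k : ℤ, φ - S.θ = (k : ℝ) * (Real.pi / 2)

/-- The opposite side label. -/
def _root_.SqSide.opp : SqSide → SqSide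
  | SqSide.top => SqSide.bottom
  | SqSide.bottom => SqSide.top
  | SqSide.left => SqSide.right
  | SqSide.right => SqSide.left

end Square

/-- The set of contact pairs of the square `S` with respect to the point set `P`:
pairs `(p, a)` with `p ∈ P` lying on the side of `S` labeled `a`. -/
def contactPairs (P : Finset (ℝ × ℝ)) (S : Square) : Set ((ℝ × ℝ) × SqSide) :=
  {pa | pa.1 ∈ P ∧ S.OnSide pa.2 pa.1}

/-- The set of contact points of `S`: points of `P` on the boundary of `S`. -/
def contactPoints (P : Finset (ℝ × ℝ)) (S : Square) : Set (ℝ × ℝ) :=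
  {p | p ∈ P ∧ S.OnBoundary p}

/-- `S` is an empty square among `P`: a (validly parametrized) square whose
interior contains no point of `P`. -/
def IsEmptySquare (P : Finset (ℝ × ℝ)) (S : Square) : Prop :=
  S.Valid ∧ ∀ p ∈ P, ¬ S.InteriorMem p

/-- `P` is in general position: no square in any orientation has five or more
contact pairs among `P`. -/
def GenPos (P : Finset (ℝ × ℝ)) : Prop :=
  ∀ S : Square, S.Valid → (contactPairs P S).ncard ≤ 4

/-- A `4`-square: an empty square with exactly four contact pairs. -/
def Is4Square (P : Finset (ℝ × ℝ)) (S : Square) : Prop :=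
  IsEmptySquare P S ∧ (contactPairs P S).ncard = 4

/-- A nontrivial `4`-square: a `4`-square which is not a degenerate
single-point square (i.e. it has positive radius). -/
def IsNontrivial4Square (P : Finset (ℝ × ℝ)) (S : Square) : Prop :=
  Is4Square P S ∧ 0 < S.r

/-- A `(4,k)`-square: a `4`-square with exactly `k` contact points. -/
def Is4kSquare (P : Finset (ℝ × ℝ)) (k : ℕ) (S : Square) : Prop :=
  Is4Square P S ∧ (contactPoints P S).ncard = k

/-- `S` is stapled: some side of `S` contains two distinct points of `P`. -/
def IsStapled (P : Finset (ℝ × ℝ)) (S : Square) : Prop :=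
  ∃ a : SqSide, ∃ p ∈ P, ∃ q ∈ P, p ≠ q ∧ S.OnSide a p ∧ S.OnSide a q

/- ===== auxiliary lemmas ===== -/

namespace GP2Aux

open SqSide

lemma lx_sub (S : Square) (p q : ℝ × ℝ) :
    S.lx p - S.lx q = (p.1 - q.1) * Real.cos S.θ + (p.2 - q.2) * Real.sin S.θ := by
  simp [Square.lx]; ring

lemma ly_sub (S : Square) (p q : ℝ × ℝ) :
    S.ly p - S.ly q = -(p.1 - q.1) * Real.sin S.θ + (p.2 - q.2) * Real.cos S.θ := by
  simp [Square.ly]; ring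

lemma lx_diff_center (S S' : Square) (hθ : S.θ = S'.θ) (p : ℝ × ℝ) :
    S.lx p - S'.lx p =
      (S'.center.1 - S.center.1) * Real.cos S.θ + (S'.center.2 - S.center.2) * Real.sin S.θ := by
  simp [Square.lx, hθ]; ring

lemma ly_diff_center (S S' : Square) (hθ : S.θ = S'.θ) (p : ℝ × ℝ) :
    S.ly p - S'.ly p =
      -(S'.center.1 - S.center.1) * Real.sin S.θ + (S'.center.2 - S.center.2) * Real.cos S.θ := by
  simp [Square.ly, hθ]; ring

lemma eq_of_dot_eq_zero (θ a b : ℝ) (h1 : a * Real.cos θ + b * Real.sin θ = 0)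
    (h2 : -a * Real.sin θ + b * Real.cos θ = 0) : a = 0 ∧ b = 0 := by
  have hp := Real.sin_sq_add_cos_sq θ
  constructor
  · linear_combination Real.cos θ * h1 - Real.sin θ * h2 - a * hp
  · linear_combination Real.sin θ * h1 + Real.cos θ * h2 - b * hp

lemma theta_eq_of_det_zero {θ θ' : ℝ} (h0 : 0 ≤ θ) (h1 : θ < Real.pi / 2)
    (h0' : 0 ≤ θ') (h1' : θ' < Real.pi / 2)
    (hdet : Real.sin θ' * Real.cos θ - Real.cos θ' * Real.sin θ = 0) : θ = θ' := by
  have hπ : 0 < Real.pi := Real.pi_pos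
  have hs : Real.sin (θ' - θ) = 0 := by rw [Real.sin_sub]; linarith [hdet]
  have := (Real.sin_eq_zero_iff_of_lt_of_lt (x := θ' - θ) (by linarith) (by linarith)).1 hs
  linarith

lemma parallel_of_perp {w : ℝ × ℝ} (hw : w ≠ (0, 0)) {a b a' b' : ℝ}
    (h1 : a * w.1 + b * w.2 = 0) (h2 : a' * w.1 + b' * w.2 = 0) :
    a * b' - b * a' = 0 := by
  have hc1 : (a * b' - b * a') * w.1 = 0 := by linear_combination b' * h1 - b * h2
  have hc2 : (a * b' - b * a') * w.2 = 0 := by linear_combination -a' * h1 + a * h2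
  rcases mul_eq_zero.1 hc1 with h | h
  · exact h
  rcases mul_eq_zero.1 hc2 with h' | h'
  · exact h'
  exact absurd (Prod.ext h h') hw

instance : Fintype SqSide :=
  ⟨{SqSide.top, SqSide.right, SqSide.bottom, SqSide.left}, by intro a; cases a <;> simp⟩

lemma cp_finite (P : Finset (ℝ × ℝ)) (S : Square) : (contactPairs P S).Finite := by
  apply Set.Finite.subset (Set.Finite.prod P.finite_toSet (Set.finite_univ (α := SqSide)))
  intro x hx
  exact ⟨hx.1, Set.mem_univ _⟩

end GP2Aux

namespace GP2Aux

/-- square with center shifted by `a·e + b·f`. -/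
noncomputable def shiftSq (S : Square) (a b r' : ℝ) : Square :=
  ⟨(S.center.1 + a * Real.cos S.θ - b * Real.sin S.θ,
    S.center.2 + a * Real.sin S.θ + b * Real.cos S.θ), r', S.θ⟩

lemma shiftSq_theta (S : Square) (a b r' : ℝ) : (shiftSq S a b r').θ = S.θ := rfl

lemma shiftSq_r (S : Square) (a b r' : ℝ) : (shiftSq S a b r').r = r' := rfl

lemma lx_shiftSq (S : Square) (a b r' : ℝ) (q : ℝ × ℝ) :
    (shiftSq S a b r').lx q = S.lx q - a := by
  have hp := Real.sin_sq_add_cos_sq S.θ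
  simp only [Square.lx, shiftSq]
  linear_combination (-a) * hp

lemma ly_shiftSq (S : Square) (a b r' : ℝ) (q : ℝ × ℝ) :
    (shiftSq S a b r').ly q = S.ly q - b := by
  have hp := Real.sin_sq_add_cos_sq S.θ
  simp only [Square.ly, shiftSq]
  linear_combination (-b) * hp

/-- rotation of side labels when replacing a `θ = π/2` square by a `θ = 0` one. -/
def rotSide : SqSide → SqSide
  | SqSide.top => SqSide.left
  | SqSide.right => SqSide.top
  | SqSide.bottom => SqSide.right
  | SqSide.left => SqSide.bottom

lemma rotSide_inj : Function.Injective rotSide := by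
  intro a b h
  cases a <;> cases b <;> simp_all [rotSide]

lemma onSide_rot (c : ℝ × ℝ) (r : ℝ) (a : SqSide) (p : ℝ × ℝ)
    (h : Square.OnSide ⟨c, r, Real.pi / 2⟩ a p) :
    Square.OnSide ⟨c, r, 0⟩ (rotSide a) p := by
  have hx : Square.lx ⟨c, r, Real.pi / 2⟩ p = Square.ly ⟨c, r, 0⟩ p := by
    simp [Square.lx, Square.ly]
  have hy : Square.ly ⟨c, r, Real.pi / 2⟩ p = -Square.lx ⟨c, r, 0⟩ p := by
    simp [Square.lx, Square.ly]
  cases a <;>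
    simp only [Square.OnSide, rotSide, hx, hy, abs_neg, neg_eq_iff_eq_neg, neg_neg] at h ⊢ <;>
    constructor <;> try { exact h.1 } <;> try { exact h.2 }

end GP2Aux

namespace GP2Aux

/-- From a square (with orientation in `[0, π/2]`) carrying a 4-element set of
contact pairs plus one extra contact pair, derive a contradiction with `GenPos`. -/
lemma no_five {P : Finset (ℝ × ℝ)} (hP : GenPos P) (c : ℝ × ℝ) (r θ : ℝ)
    (hr : 0 ≤ r) (hθ0 : 0 ≤ θ) (hθ2 : θ ≤ Real.pi / 2)
    (C : Set ((ℝ × ℝ) × SqSide)) (hC : C ⊆ contactPairs P ⟨c, r, θ⟩)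
    (h4 : C.ncard = 4) (x : (ℝ × ℝ) × SqSide)
    (hx : x ∈ contactPairs P ⟨c, r, θ⟩) (hxC : x ∉ C) : False := by
  have hCfin : C.Finite := (cp_finite P ⟨c, r, θ⟩).subset hC
  have hins : (insert x C).ncard = 5 := by
    rw [Set.ncard_insert_of_notMem hxC hCfin, h4]
  have hsub : insert x C ⊆ contactPairs P ⟨c, r, θ⟩ := Set.insert_subset hx hC
  rcases lt_or_eq_of_le hθ2 with hlt | heq
  · have hV : Square.Valid ⟨c, r, θ⟩ := ⟨hr, hθ0, hlt⟩
    have := hP ⟨c, r, θ⟩ hV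
    have h5 : 5 ≤ (contactPairs P ⟨c, r, θ⟩).ncard := by
      rw [← hins]
      exact Set.ncard_le_ncard hsub (cp_finite P _)
    omega
  · -- θ = π / 2 : relabel sides and use the square with θ = 0
    have hV : Square.Valid ⟨c, r, 0⟩ := ⟨hr, le_refl 0, by positivity⟩
    set φ : (ℝ × ℝ) × SqSide → (ℝ × ℝ) × SqSide := fun y => (y.1, rotSide y.2) with hφ
    have hφinj : Function.Injective φ := by
      intro a b h
      rw [Prod.ext_iff] at h ⊢
      exact ⟨h.1, rotSide_inj h.2⟩
    have hsub' : φ '' (insert x C) ⊆ contactPairs P ⟨c, r, 0⟩ := by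
      rintro y ⟨z, hz, rfl⟩
      have hz' := hsub hz
      subst heq
      exact ⟨hz'.1, onSide_rot c r z.2 z.1 hz'.2⟩
    have h5 : 5 ≤ (contactPairs P ⟨c, r, 0⟩).ncard := by
      have : (φ '' (insert x C)).ncard = 5 := by
        rw [Set.ncard_image_of_injective _ hφinj, hins]
      rw [← this]
      exact Set.ncard_le_ncard hsub' (cp_finite P _)
    have := hP ⟨c, r, 0⟩ hV
    omega

end GP2Aux

namespace GP2Aux

lemma slide_TB {P : Finset (ℝ × ℝ)} (hP : GenPos P) (S : Square) (hV : S.Valid)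
    (C : Set ((ℝ × ℝ) × SqSide)) (hC : C ⊆ contactPairs P S) (h4 : C.ncard = 4)
    (hside : ∀ x ∈ C, x.2 = SqSide.top ∨ x.2 = SqSide.bottom) : False := by
  have hr0 : 0 ≤ S.r := hV.1
  have hfin : C.Finite := (cp_finite P S).subset hC
  have hne : C.Nonempty := Set.nonempty_of_ncard_ne_zero (by omega)
  obtain ⟨y, hy⟩ := hne
  have hbnd : ∀ x ∈ C, |S.lx x.1| ≤ S.r ∧ |S.ly x.1| ≤ S.r := by
    intro x hx
    have hOS := (hC hx).2
    rcases hside x hx with h | h <;> rw [h] at hOS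
    · exact ⟨hOS.2, by rw [hOS.1]; simp [abs_of_nonneg hr0]⟩
    · exact ⟨hOS.2, by rw [hOS.1]; simp [abs_of_nonneg hr0]⟩
  obtain ⟨x₀, hx₀F, hmin⟩ :=
    hfin.toFinset.exists_min_image (fun x => S.lx x.1) ⟨y, hfin.mem_toFinset.2 hy⟩
  have hx₀C : x₀ ∈ C := hfin.mem_toFinset.1 hx₀F
  set t : ℝ := S.lx x₀.1 + S.r with ht
  set T : Square := shiftSq S t 0 S.r with hT
  have habs : ∀ x ∈ C, |T.lx x.1| ≤ T.r := by
    intro x hx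
    rw [hT, lx_shiftSq, shiftSq_r, abs_le]
    have h1 := (hbnd x hx).1
    have h2 := (hbnd x₀ hx₀C).1
    have h3 : S.lx x₀.1 ≤ S.lx x.1 := hmin x (hfin.mem_toFinset.2 hx)
    rw [abs_le] at h1 h2
    constructor <;> rw [ht] <;> linarith
  have hCT : C ⊆ contactPairs P T := by
    intro x hx
    refine ⟨(hC hx).1, ?_⟩
    have hOS := (hC hx).2
    rcases hside x hx with h | h <;> rw [h] at hOS ⊢
    · exact ⟨by rw [hT, ly_shiftSq, shiftSq_r]; rw [hOS.1]; ring, habs x hx⟩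
    · exact ⟨by rw [hT, ly_shiftSq, shiftSq_r]; rw [hOS.1]; ring, habs x hx⟩
  have hnew : ((x₀.1, SqSide.left) : (ℝ × ℝ) × SqSide) ∈ contactPairs P T := by
    refine ⟨(hC hx₀C).1, ?_⟩
    refine ⟨by rw [hT, lx_shiftSq, shiftSq_r, ht]; ring, ?_⟩
    rw [hT, ly_shiftSq, shiftSq_r]
    simpa using (hbnd x₀ hx₀C).2
  have hnotC : ((x₀.1, SqSide.left) : (ℝ × ℝ) × SqSide) ∉ C := by
    intro hmem
    rcases hside _ hmem with h | h <;> simp at h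
  exact no_five hP T.center T.r T.θ hr0 hV.2.1 hV.2.2.le C hCT h4 _ hnew hnotC

end GP2Aux

namespace GP2Aux

lemma slide_LR {P : Finset (ℝ × ℝ)} (hP : GenPos P) (S : Square) (hV : S.Valid)
    (C : Set ((ℝ × ℝ) × SqSide)) (hC : C ⊆ contactPairs P S) (h4 : C.ncard = 4)
    (hside : ∀ x ∈ C, x.2 = SqSide.left ∨ x.2 = SqSide.right) : False := by
  have hr0 : 0 ≤ S.r := hV.1
  have hfin : C.Finite := (cp_finite P S).subset hC
  have hne : C.Nonempty := Set.nonempty_of_ncard_ne_zero (by omega)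
  obtain ⟨y, hy⟩ := hne
  have hbnd : ∀ x ∈ C, |S.ly x.1| ≤ S.r ∧ |S.lx x.1| ≤ S.r := by
    intro x hx
    have hOS := (hC hx).2
    rcases hside x hx with h | h <;> rw [h] at hOS
    · exact ⟨hOS.2, by rw [hOS.1]; simp [abs_of_nonneg hr0]⟩
    · exact ⟨hOS.2, by rw [hOS.1]; simp [abs_of_nonneg hr0]⟩
  obtain ⟨x₀, hx₀F, hmin⟩ :=
    hfin.toFinset.exists_min_image (fun x => S.ly x.1) ⟨y, hfin.mem_toFinset.2 hy⟩
  have hx₀C : x₀ ∈ C := hfin.mem_toFinset.1 hx₀F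
  set t : ℝ := S.ly x₀.1 + S.r with ht
  set T : Square := shiftSq S 0 t S.r with hT
  have habs : ∀ x ∈ C, |T.ly x.1| ≤ T.r := by
    intro x hx
    rw [hT, ly_shiftSq, shiftSq_r, abs_le]
    have h1 := (hbnd x hx).1
    have h2 := (hbnd x₀ hx₀C).1
    have h3 : S.ly x₀.1 ≤ S.ly x.1 := hmin x (hfin.mem_toFinset.2 hx)
    rw [abs_le] at h1 h2
    constructor <;> rw [ht] <;> linarith
  have hCT : C ⊆ contactPairs P T := by
    intro x hx
    refine ⟨(hC hx).1, ?_⟩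
    have hOS := (hC hx).2
    rcases hside x hx with h | h <;> rw [h] at hOS ⊢
    · exact ⟨by rw [hT, lx_shiftSq, shiftSq_r]; rw [hOS.1]; ring, habs x hx⟩
    · exact ⟨by rw [hT, lx_shiftSq, shiftSq_r]; rw [hOS.1]; ring, habs x hx⟩
  have hnew : ((x₀.1, SqSide.bottom) : (ℝ × ℝ) × SqSide) ∈ contactPairs P T := by
    refine ⟨(hC hx₀C).1, ?_⟩
    refine ⟨by rw [hT, ly_shiftSq, shiftSq_r, ht]; ring, ?_⟩
    rw [hT, lx_shiftSq, shiftSq_r]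
    simpa using (hbnd x₀ hx₀C).2
  have hnotC : ((x₀.1, SqSide.bottom) : (ℝ × ℝ) × SqSide) ∉ C := by
    intro hmem
    rcases hside _ hmem with h | h <;> simp at h
  exact no_five hP T.center T.r T.θ hr0 hV.2.1 hV.2.2.le C hCT h4 _ hnew hnotC

end GP2Aux

namespace GP2Aux

lemma slide_TR {P : Finset (ℝ × ℝ)} (hP : GenPos P) (S : Square) (hV : S.Valid)
    (C : Set ((ℝ × ℝ) × SqSide)) (hC : C ⊆ contactPairs P S) (h4 : C.ncard = 4)
    (hside : ∀ x ∈ C, x.2 = SqSide.top ∨ x.2 = SqSide.right) : False := by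
  classical
  have hr0 : 0 ≤ S.r := hV.1
  have hfin : C.Finite := (cp_finite P S).subset hC
  have hne : C.Nonempty := Set.nonempty_of_ncard_ne_zero (by omega)
  obtain ⟨y, hy⟩ := hne
  set val : (ℝ × ℝ) × SqSide → ℝ :=
    fun x => if x.2 = SqSide.top then -(S.lx x.1 + S.r) / 2 else -(S.ly x.1 + S.r) / 2 with hval
  -- basic bounds from membership
  have hbnd : ∀ x ∈ C, -S.r ≤ val x ∧ val x ≤ 0 := by
    intro x hx
    have hOS := (hC hx).2
    rcases hside x hx with h | h <;> rw [h] at hOS <;> rw [hval] <;> simp only [h]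
    · have := abs_le.1 hOS.2
      constructor <;> simp <;> linarith [this.1, this.2]
    · have := abs_le.1 hOS.2
      constructor <;> simp <;> linarith [this.1, this.2]
  obtain ⟨x₀, hx₀F, hmax⟩ :=
    hfin.toFinset.exists_max_image val ⟨y, hfin.mem_toFinset.2 hy⟩
  have hx₀C : x₀ ∈ C := hfin.mem_toFinset.1 hx₀F
  set t : ℝ := val x₀ with ht
  have htle : ∀ x ∈ C, val x ≤ t := fun x hx => hmax x (hfin.mem_toFinset.2 hx)
  have htr : 0 ≤ S.r + t := by have := (hbnd x₀ hx₀C).1; linarith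
  set T : Square := shiftSq S (-t) (-t) (S.r + t) with hT
  have hlxT : ∀ q, T.lx q = S.lx q + t := by intro q; rw [hT, lx_shiftSq]; ring
  have hlyT : ∀ q, T.ly q = S.ly q + t := by intro q; rw [hT, ly_shiftSq]; ring
  have hCT : C ⊆ contactPairs P T := by
    intro x hx
    refine ⟨(hC hx).1, ?_⟩
    have hOS := (hC hx).2
    have hvx := htle x hx
    rcases hside x hx with h | h <;> rw [h] at hOS ⊢ <;> rw [hval] at hvx <;>
      simp only [h, if_pos, if_neg, reduceCtorEq, reduceIte] at hvx
    · refine ⟨by rw [hlyT, shiftSq_r, hOS.1], ?_⟩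
      rw [hlxT, shiftSq_r, abs_le]
      have := abs_le.1 hOS.2
      constructor <;> linarith [this.1, this.2]
    · refine ⟨by rw [hlxT, shiftSq_r, hOS.1], ?_⟩
      rw [hlyT, shiftSq_r, abs_le]
      have := abs_le.1 hOS.2
      constructor <;> linarith [this.1, this.2]
  have hOS₀ := (hC hx₀C).2
  have hnew : ∃ b : SqSide, b ≠ SqSide.top ∧ b ≠ SqSide.right ∧
      ((x₀.1, b) : (ℝ × ℝ) × SqSide) ∈ contactPairs P T := by
    rcases hside x₀ hx₀C with h | h <;> rw [h] at hOS₀ <;> rw [hval] at ht <;>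
      simp only [h, if_pos, if_neg, reduceCtorEq, reduceIte] at ht
    · refine ⟨SqSide.left, by simp, by simp, (hC hx₀C).1, ?_, ?_⟩
      · rw [hlxT, shiftSq_r]; linarith [ht]
      · rw [hlyT, shiftSq_r, hOS₀.1, abs_of_nonneg htr]
    · refine ⟨SqSide.bottom, by simp, by simp, (hC hx₀C).1, ?_, ?_⟩
      · rw [hlyT, shiftSq_r]; linarith [ht]
      · rw [hlxT, shiftSq_r, hOS₀.1, abs_of_nonneg htr]
  obtain ⟨b, hb1, hb2, hbmem⟩ := hnew
  have hnotC : ((x₀.1, b) : (ℝ × ℝ) × SqSide) ∉ C := by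
    intro hmem
    rcases hside _ hmem with h | h <;> simp_all
  exact no_five hP T.center T.r T.θ htr hV.2.1 hV.2.2.le C hCT h4 _ hbmem hnotC

end GP2Aux

namespace GP2Aux

lemma slide_TL {P : Finset (ℝ × ℝ)} (hP : GenPos P) (S : Square) (hV : S.Valid)
    (C : Set ((ℝ × ℝ) × SqSide)) (hC : C ⊆ contactPairs P S) (h4 : C.ncard = 4)
    (hside : ∀ x ∈ C, x.2 = SqSide.top ∨ x.2 = SqSide.left) : False := by
  classical
  have hr0 : 0 ≤ S.r := hV.1
  have hfin : C.Finite := (cp_finite P S).subset hC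
  have hne : C.Nonempty := Set.nonempty_of_ncard_ne_zero (by omega)
  obtain ⟨y, hy⟩ := hne
  set val : (ℝ × ℝ) × SqSide → ℝ :=
    fun x => if x.2 = SqSide.top then (S.lx x.1 - S.r) / 2 else -(S.ly x.1 + S.r) / 2 with hval
  have hbnd : ∀ x ∈ C, -S.r ≤ val x ∧ val x ≤ 0 := by
    intro x hx
    have hOS := (hC hx).2
    rcases hside x hx with h | h <;> rw [h] at hOS <;> rw [hval] <;> simp only [h, if_pos, if_neg, reduceCtorEq, reduceIte]
    · have := abs_le.1 hOS.2
      constructor <;> linarith [this.1, this.2]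
    · have := abs_le.1 hOS.2
      constructor <;> linarith [this.1, this.2]
  obtain ⟨x₀, hx₀F, hmax⟩ :=
    hfin.toFinset.exists_max_image val ⟨y, hfin.mem_toFinset.2 hy⟩
  have hx₀C : x₀ ∈ C := hfin.mem_toFinset.1 hx₀F
  set t : ℝ := val x₀ with ht
  have htle : ∀ x ∈ C, val x ≤ t := fun x hx => hmax x (hfin.mem_toFinset.2 hx)
  have htr : 0 ≤ S.r + t := by have := (hbnd x₀ hx₀C).1; linarith
  set T : Square := shiftSq S (t) (-t) (S.r + t) with hT
  have hlxT : ∀ q, T.lx q = S.lx q - t := by intro q; rw [hT, lx_shiftSq] <;> ring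
  have hlyT : ∀ q, T.ly q = S.ly q + t := by intro q; rw [hT, ly_shiftSq] <;> ring
  have hCT : C ⊆ contactPairs P T := by
    intro x hx
    refine ⟨(hC hx).1, ?_⟩
    have hOS := (hC hx).2
    have hvx := htle x hx
    rcases hside x hx with h | h <;> rw [h] at hOS ⊢ <;> rw [hval] at hvx <;>
      simp only [h, if_pos, if_neg, reduceCtorEq, reduceIte] at hvx
    · refine ⟨by rw [hlyT, shiftSq_r, hOS.1] <;> ring, ?_⟩
      rw [hlxT, shiftSq_r, abs_le]
      have := abs_le.1 hOS.2
      constructor <;> linarith [this.1, this.2]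
    · refine ⟨by rw [hlxT, shiftSq_r, hOS.1] <;> ring, ?_⟩
      rw [hlyT, shiftSq_r, abs_le]
      have := abs_le.1 hOS.2
      constructor <;> linarith [this.1, this.2]
  have hOS₀ := (hC hx₀C).2
  have hnew : ∃ b : SqSide, b ≠ SqSide.top ∧ b ≠ SqSide.left ∧
      ((x₀.1, b) : (ℝ × ℝ) × SqSide) ∈ contactPairs P T := by
    rcases hside x₀ hx₀C with h | h <;> rw [h] at hOS₀ <;> rw [hval] at ht <;>
      simp only [h, if_pos, if_neg, reduceCtorEq, reduceIte] at ht
    · refine ⟨SqSide.right, by simp, by simp, (hC hx₀C).1, ?_, ?_⟩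
      · rw [hlxT, shiftSq_r]; linarith [ht]
      · rw [hlyT, shiftSq_r, hOS₀.1, abs_le]; constructor <;> linarith
    · refine ⟨SqSide.bottom, by simp, by simp, (hC hx₀C).1, ?_, ?_⟩
      · rw [hlyT, shiftSq_r]; linarith [ht]
      · rw [hlxT, shiftSq_r, hOS₀.1, abs_le]; constructor <;> linarith
  obtain ⟨b, hb1, hb2, hbmem⟩ := hnew
  have hnotC : ((x₀.1, b) : (ℝ × ℝ) × SqSide) ∉ C := by
    intro hmem
    rcases hside _ hmem with h | h <;> simp_all
  exact no_five hP T.center T.r T.θ htr hV.2.1 hV.2.2.le C hCT h4 _ hbmem hnotC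

lemma slide_BR {P : Finset (ℝ × ℝ)} (hP : GenPos P) (S : Square) (hV : S.Valid)
    (C : Set ((ℝ × ℝ) × SqSide)) (hC : C ⊆ contactPairs P S) (h4 : C.ncard = 4)
    (hside : ∀ x ∈ C, x.2 = SqSide.bottom ∨ x.2 = SqSide.right) : False := by
  classical
  have hr0 : 0 ≤ S.r := hV.1
  have hfin : C.Finite := (cp_finite P S).subset hC
  have hne : C.Nonempty := Set.nonempty_of_ncard_ne_zero (by omega)
  obtain ⟨y, hy⟩ := hne
  set val : (ℝ × ℝ) × SqSide → ℝ :=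
    fun x => if x.2 = SqSide.bottom then -(S.lx x.1 + S.r) / 2 else (S.ly x.1 - S.r) / 2 with hval
  have hbnd : ∀ x ∈ C, -S.r ≤ val x ∧ val x ≤ 0 := by
    intro x hx
    have hOS := (hC hx).2
    rcases hside x hx with h | h <;> rw [h] at hOS <;> rw [hval] <;> simp only [h, if_pos, if_neg, reduceCtorEq, reduceIte]
    · have := abs_le.1 hOS.2
      constructor <;> linarith [this.1, this.2]
    · have := abs_le.1 hOS.2
      constructor <;> linarith [this.1, this.2]
  obtain ⟨x₀, hx₀F, hmax⟩ :=
    hfin.toFinset.exists_max_image val ⟨y, hfin.mem_toFinset.2 hy⟩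
  have hx₀C : x₀ ∈ C := hfin.mem_toFinset.1 hx₀F
  set t : ℝ := val x₀ with ht
  have htle : ∀ x ∈ C, val x ≤ t := fun x hx => hmax x (hfin.mem_toFinset.2 hx)
  have htr : 0 ≤ S.r + t := by have := (hbnd x₀ hx₀C).1; linarith
  set T : Square := shiftSq S (-t) (t) (S.r + t) with hT
  have hlxT : ∀ q, T.lx q = S.lx q + t := by intro q; rw [hT, lx_shiftSq] <;> ring
  have hlyT : ∀ q, T.ly q = S.ly q - t := by intro q; rw [hT, ly_shiftSq] <;> ring
  have hCT : C ⊆ contactPairs P T := by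
    intro x hx
    refine ⟨(hC hx).1, ?_⟩
    have hOS := (hC hx).2
    have hvx := htle x hx
    rcases hside x hx with h | h <;> rw [h] at hOS ⊢ <;> rw [hval] at hvx <;>
      simp only [h, if_pos, if_neg, reduceCtorEq, reduceIte] at hvx
    · refine ⟨by rw [hlyT, shiftSq_r, hOS.1] <;> ring, ?_⟩
      rw [hlxT, shiftSq_r, abs_le]
      have := abs_le.1 hOS.2
      constructor <;> linarith [this.1, this.2]
    · refine ⟨by rw [hlxT, shiftSq_r, hOS.1] <;> ring, ?_⟩
      rw [hlyT, shiftSq_r, abs_le]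
      have := abs_le.1 hOS.2
      constructor <;> linarith [this.1, this.2]
  have hOS₀ := (hC hx₀C).2
  have hnew : ∃ b : SqSide, b ≠ SqSide.bottom ∧ b ≠ SqSide.right ∧
      ((x₀.1, b) : (ℝ × ℝ) × SqSide) ∈ contactPairs P T := by
    rcases hside x₀ hx₀C with h | h <;> rw [h] at hOS₀ <;> rw [hval] at ht <;>
      simp only [h, if_pos, if_neg, reduceCtorEq, reduceIte] at ht
    · refine ⟨SqSide.left, by simp, by simp, (hC hx₀C).1, ?_, ?_⟩
      · rw [hlxT, shiftSq_r]; linarith [ht]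
      · rw [hlyT, shiftSq_r, hOS₀.1, abs_le]; constructor <;> linarith
    · refine ⟨SqSide.top, by simp, by simp, (hC hx₀C).1, ?_, ?_⟩
      · rw [hlyT, shiftSq_r]; linarith [ht]
      · rw [hlxT, shiftSq_r, hOS₀.1, abs_le]; constructor <;> linarith
  obtain ⟨b, hb1, hb2, hbmem⟩ := hnew
  have hnotC : ((x₀.1, b) : (ℝ × ℝ) × SqSide) ∉ C := by
    intro hmem
    rcases hside _ hmem with h | h <;> simp_all
  exact no_five hP T.center T.r T.θ htr hV.2.1 hV.2.2.le C hCT h4 _ hbmem hnotC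

lemma slide_BL {P : Finset (ℝ × ℝ)} (hP : GenPos P) (S : Square) (hV : S.Valid)
    (C : Set ((ℝ × ℝ) × SqSide)) (hC : C ⊆ contactPairs P S) (h4 : C.ncard = 4)
    (hside : ∀ x ∈ C, x.2 = SqSide.bottom ∨ x.2 = SqSide.left) : False := by
  classical
  have hr0 : 0 ≤ S.r := hV.1
  have hfin : C.Finite := (cp_finite P S).subset hC
  have hne : C.Nonempty := Set.nonempty_of_ncard_ne_zero (by omega)
  obtain ⟨y, hy⟩ := hne
  set val : (ℝ × ℝ) × SqSide → ℝ :=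
    fun x => if x.2 = SqSide.bottom then (S.lx x.1 - S.r) / 2 else (S.ly x.1 - S.r) / 2 with hval
  have hbnd : ∀ x ∈ C, -S.r ≤ val x ∧ val x ≤ 0 := by
    intro x hx
    have hOS := (hC hx).2
    rcases hside x hx with h | h <;> rw [h] at hOS <;> rw [hval] <;> simp only [h, if_pos, if_neg, reduceCtorEq, reduceIte]
    · have := abs_le.1 hOS.2
      constructor <;> linarith [this.1, this.2]
    · have := abs_le.1 hOS.2
      constructor <;> linarith [this.1, this.2]
  obtain ⟨x₀, hx₀F, hmax⟩ :=
    hfin.toFinset.exists_max_image val ⟨y, hfin.mem_toFinset.2 hy⟩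
  have hx₀C : x₀ ∈ C := hfin.mem_toFinset.1 hx₀F
  set t : ℝ := val x₀ with ht
  have htle : ∀ x ∈ C, val x ≤ t := fun x hx => hmax x (hfin.mem_toFinset.2 hx)
  have htr : 0 ≤ S.r + t := by have := (hbnd x₀ hx₀C).1; linarith
  set T : Square := shiftSq S (t) (t) (S.r + t) with hT
  have hlxT : ∀ q, T.lx q = S.lx q - t := by intro q; rw [hT, lx_shiftSq] <;> ring
  have hlyT : ∀ q, T.ly q = S.ly q - t := by intro q; rw [hT, ly_shiftSq] <;> ring
  have hCT : C ⊆ contactPairs P T := by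
    intro x hx
    refine ⟨(hC hx).1, ?_⟩
    have hOS := (hC hx).2
    have hvx := htle x hx
    rcases hside x hx with h | h <;> rw [h] at hOS ⊢ <;> rw [hval] at hvx <;>
      simp only [h, if_pos, if_neg, reduceCtorEq, reduceIte] at hvx
    · refine ⟨by rw [hlyT, shiftSq_r, hOS.1] <;> ring, ?_⟩
      rw [hlxT, shiftSq_r, abs_le]
      have := abs_le.1 hOS.2
      constructor <;> linarith [this.1, this.2]
    · refine ⟨by rw [hlxT, shiftSq_r, hOS.1] <;> ring, ?_⟩
      rw [hlyT, shiftSq_r, abs_le]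
      have := abs_le.1 hOS.2
      constructor <;> linarith [this.1, this.2]
  have hOS₀ := (hC hx₀C).2
  have hnew : ∃ b : SqSide, b ≠ SqSide.bottom ∧ b ≠ SqSide.left ∧
      ((x₀.1, b) : (ℝ × ℝ) × SqSide) ∈ contactPairs P T := by
    rcases hside x₀ hx₀C with h | h <;> rw [h] at hOS₀ <;> rw [hval] at ht <;>
      simp only [h, if_pos, if_neg, reduceCtorEq, reduceIte] at ht
    · refine ⟨SqSide.right, by simp, by simp, (hC hx₀C).1, ?_, ?_⟩
      · rw [hlxT, shiftSq_r]; linarith [ht]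
      · rw [hlyT, shiftSq_r, hOS₀.1, abs_le]; constructor <;> linarith
    · refine ⟨SqSide.top, by simp, by simp, (hC hx₀C).1, ?_, ?_⟩
      · rw [hlyT, shiftSq_r]; linarith [ht]
      · rw [hlxT, shiftSq_r, hOS₀.1, abs_le]; constructor <;> linarith
  obtain ⟨b, hb1, hb2, hbmem⟩ := hnew
  have hnotC : ((x₀.1, b) : (ℝ × ℝ) × SqSide) ∉ C := by
    intro hmem
    rcases hside _ hmem with h | h <;> simp_all
  exact no_five hP T.center T.r T.θ htr hV.2.1 hV.2.2.le C hCT h4 _ hbmem hnotC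

end GP2Aux

namespace GP2Aux

set_option maxHeartbeats 1000000 in
/-- The hard degenerate case: four contact points, one on each side, no shared
corner, and the "circumscribing family" condition `(A,B) = 0`. Then `GenPos`
fails, because the family of squares can be rotated until a fifth contact
appears. -/
lemma no_share_case {P : Finset (ℝ × ℝ)} (hP : GenPos P) (S : Square)
    (hV : S.Valid) (hr : 0 < S.r)
    (pt pr pb pl : ℝ × ℝ)
    (hptP : pt ∈ P) (hprP : pr ∈ P) (hpbP : pb ∈ P) (hplP : pl ∈ P)
    (hOT : S.OnSide SqSide.top pt) (hOR : S.OnSide SqSide.right pr)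
    (hOB : S.OnSide SqSide.bottom pb) (hOL : S.OnSide SqSide.left pl)
    (htr : pt ≠ pr) (htl : pt ≠ pl) (hbr : pb ≠ pr) (hbl : pb ≠ pl)
    (hA : pr.1 - pl.1 = pt.2 - pb.2) (hB : pr.2 - pl.2 = -(pt.1 - pb.1)) :
    False := by
  classical
  have hπ : (0:ℝ) < Real.pi / 2 := by positivity
  set θ₀ : ℝ := S.θ with hθ₀
  set w1 : ℝ := pt.1 - pb.1 with hw1
  set w2 : ℝ := pt.2 - pb.2 with hw2
  set m1 : ℝ := (pr.1 + pl.1) / 2 with hm1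
  set m2 : ℝ := (pr.2 + pl.2) / 2 with hm2
  set n1 : ℝ := (pt.1 + pb.1) / 2 with hn1
  set n2 : ℝ := (pt.2 + pb.2) / 2 with hn2
  set rr : ℝ → ℝ := fun θ => (-Real.sin θ * w1 + Real.cos θ * w2) / 2 with hrr
  set xT : ℝ → ℝ := fun θ => Real.cos θ * (pt.1 - m1) + Real.sin θ * (pt.2 - m2) with hxT
  set xB : ℝ → ℝ := fun θ => Real.cos θ * (pb.1 - m1) + Real.sin θ * (pb.2 - m2) with hxB
  set yR : ℝ → ℝ := fun θ => -Real.sin θ * (pr.1 - n1) + Real.cos θ * (pr.2 - n2) with hyR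
  set yL : ℝ → ℝ := fun θ => -Real.sin θ * (pl.1 - n1) + Real.cos θ * (pl.2 - n2) with hyL
  set cen : ℝ → ℝ × ℝ := fun θ =>
    (Real.cos θ * (Real.cos θ * m1 + Real.sin θ * m2)
       - Real.sin θ * (-Real.sin θ * n1 + Real.cos θ * n2),
     Real.sin θ * (Real.cos θ * m1 + Real.sin θ * m2)
       + Real.cos θ * (-Real.sin θ * n1 + Real.cos θ * n2)) with hcen
  set Sq : ℝ → Square := fun θ => ⟨cen θ, rr θ, θ⟩ with hSq
  -- identities valid for every θ
  have hlxt : ∀ θ, (Sq θ).lx pt = xT θ := by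
    intro θ
    have hp := Real.sin_sq_add_cos_sq θ
    simp only [hSq, hcen, hxT, Square.lx]
    linear_combination (-(Real.cos θ * m1 + Real.sin θ * m2)) * hp
  have hlxb : ∀ θ, (Sq θ).lx pb = xB θ := by
    intro θ
    have hp := Real.sin_sq_add_cos_sq θ
    simp only [hSq, hcen, hxB, Square.lx]
    linear_combination (-(Real.cos θ * m1 + Real.sin θ * m2)) * hp
  have hlyr : ∀ θ, (Sq θ).ly pr = yR θ := by
    intro θ
    have hp := Real.sin_sq_add_cos_sq θ
    simp only [hSq, hcen, hyR, Square.ly]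
    linear_combination (-(-Real.sin θ * n1 + Real.cos θ * n2)) * hp
  have hlyl : ∀ θ, (Sq θ).ly pl = yL θ := by
    intro θ
    have hp := Real.sin_sq_add_cos_sq θ
    simp only [hSq, hcen, hyL, Square.ly]
    linear_combination (-(-Real.sin θ * n1 + Real.cos θ * n2)) * hp
  have hlyt : ∀ θ, (Sq θ).ly pt = rr θ := by
    intro θ
    have hp := Real.sin_sq_add_cos_sq θ
    simp only [hSq, hcen, hrr, Square.ly, hn1, hn2, hw1, hw2]
    linear_combination (-(-Real.sin θ * ((pt.1 + pb.1)/2) + Real.cos θ * ((pt.2 + pb.2)/2))) * hp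
  have hlyb : ∀ θ, (Sq θ).ly pb = -rr θ := by
    intro θ
    have hp := Real.sin_sq_add_cos_sq θ
    simp only [hSq, hcen, hrr, Square.ly, hn1, hn2, hw1, hw2]
    linear_combination (-(-Real.sin θ * ((pt.1 + pb.1)/2) + Real.cos θ * ((pt.2 + pb.2)/2))) * hp
  have hlxr : ∀ θ, (Sq θ).lx pr = rr θ := by
    intro θ
    have hp := Real.sin_sq_add_cos_sq θ
    simp only [hSq, hcen, hrr, Square.lx, hm1, hm2, hw1, hw2]
    linear_combination (-(Real.cos θ * ((pr.1 + pl.1)/2) + Real.sin θ * ((pr.2 + pl.2)/2))) * hp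
      + (Real.cos θ / 2) * hA + (Real.sin θ / 2) * hB
  have hlxl : ∀ θ, (Sq θ).lx pl = -rr θ := by
    intro θ
    have hp := Real.sin_sq_add_cos_sq θ
    simp only [hSq, hcen, hrr, Square.lx, hm1, hm2, hw1, hw2]
    linear_combination (-(Real.cos θ * ((pr.1 + pl.1)/2) + Real.sin θ * ((pr.2 + pl.2)/2))) * hp
      - (Real.cos θ / 2) * hA - (Real.sin θ / 2) * hB
  -- seed values at θ₀
  have hrr0 : rr θ₀ = S.r := by
    have e1 := ly_sub S pt pb
    rw [hOT.1, hOB.1] at e1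
    simp only [hrr, hw1, hw2]
    linarith [e1]
  have hxT0 : xT θ₀ = S.lx pt := by
    have h1 := hOR.1; have h2 := hOL.1
    simp only [Square.lx] at h1 h2 ⊢
    simp only [hxT, hm1, hm2]
    linarith [h1, h2]
  have hxB0 : xB θ₀ = S.lx pb := by
    have h1 := hOR.1; have h2 := hOL.1
    simp only [Square.lx] at h1 h2 ⊢
    simp only [hxB, hm1, hm2]
    linarith [h1, h2]
  have hyR0 : yR θ₀ = S.ly pr := by
    have h1 := hOT.1; have h2 := hOB.1
    simp only [Square.ly] at h1 h2 ⊢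
    simp only [hyR, hn1, hn2]
    linarith [h1, h2]
  have hyL0 : yL θ₀ = S.ly pl := by
    have h1 := hOT.1; have h2 := hOB.1
    simp only [Square.ly] at h1 h2 ⊢
    simp only [hyL, hn1, hn2]
    linarith [h1, h2]
  have hw : ¬(w1 = 0 ∧ w2 = 0) := by
    rintro ⟨h1, h2⟩
    rw [hrr, h1, h2] at hrr0
    simp at hrr0
    linarith
  -- the minimum constraint function
  set g : ℝ → ℝ := fun θ =>
    min (rr θ) (min (rr θ - |xT θ|) (min (rr θ - |xB θ|)
      (min (rr θ - |yR θ|) (rr θ - |yL θ|)))) with hg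
  have hgcont : Continuous g := by
    apply Continuous.min
    · simp only [hrr]; fun_prop
    apply Continuous.min
    · simp only [hrr, hxT]; fun_prop
    apply Continuous.min
    · simp only [hrr, hxB]; fun_prop
    apply Continuous.min
    · simp only [hrr, hyR]; fun_prop
    · simp only [hrr, hyL]; fun_prop
  have hc1 : ∀ θ, g θ ≤ rr θ := by intro θ; simp only [hg]; exact min_le_left _ _
  have hc2 : ∀ θ, g θ ≤ rr θ - |xT θ| := by
    intro θ; simp only [hg]; exact (min_le_right _ _).trans (min_le_left _ _)
  have hc3 : ∀ θ, g θ ≤ rr θ - |xB θ| := by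
    intro θ; simp only [hg]
    exact (min_le_right _ _).trans ((min_le_right _ _).trans (min_le_left _ _))
  have hc4 : ∀ θ, g θ ≤ rr θ - |yR θ| := by
    intro θ; simp only [hg]
    exact (min_le_right _ _).trans ((min_le_right _ _).trans
      ((min_le_right _ _).trans (min_le_left _ _)))
  have hc5 : ∀ θ, g θ ≤ rr θ - |yL θ| := by
    intro θ; simp only [hg]
    exact (min_le_right _ _).trans ((min_le_right _ _).trans
      ((min_le_right _ _).trans (min_le_right _ _)))
  have hg0 : 0 ≤ g θ₀ := by
    simp only [hg]
    have b1 := hOT.2; have b2 := hOB.2; have b3 := hOR.2; have b4 := hOL.2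
    rw [← hxT0] at b1
    rw [← hxB0] at b2
    rw [← hyR0] at b3
    rw [← hyL0] at b4
    refine le_min (by linarith) (le_min (by linarith) (le_min (by linarith)
      (le_min (by linarith) (by linarith))))
  have hθ₀I : θ₀ ∈ Set.Icc (0:ℝ) (Real.pi / 2) := ⟨hV.2.1, hV.2.2.le⟩
  by_cases hzero : ∃ θ' ∈ Set.Icc (0:ℝ) (Real.pi / 2), g θ' = 0
  · -- a tight configuration exists: build a square with five contact pairs
    obtain ⟨θ', hI, hgz⟩ := hzero
    have h1 : 0 ≤ rr θ' := by linarith [hc1 θ']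
    have h2 : |xT θ'| ≤ rr θ' := by linarith [hc2 θ']
    have h3 : |xB θ'| ≤ rr θ' := by linarith [hc3 θ']
    have h4 : |yR θ'| ≤ rr θ' := by linarith [hc4 θ']
    have h5 : |yL θ'| ≤ rr θ' := by linarith [hc5 θ']
    -- the four basic contacts
    have hct : ((pt, SqSide.top) : (ℝ × ℝ) × SqSide) ∈ contactPairs P (Sq θ') :=
      ⟨hptP, hlyt θ', by rw [hlxt θ']; exact h2⟩
    have hcr : ((pr, SqSide.right) : (ℝ × ℝ) × SqSide) ∈ contactPairs P (Sq θ') :=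
      ⟨hprP, hlxr θ', by rw [hlyr θ']; exact h4⟩
    have hcb : ((pb, SqSide.bottom) : (ℝ × ℝ) × SqSide) ∈ contactPairs P (Sq θ') :=
      ⟨hpbP, hlyb θ', by rw [hlxb θ']; exact h3⟩
    have hcl : ((pl, SqSide.left) : (ℝ × ℝ) × SqSide) ∈ contactPairs P (Sq θ') :=
      ⟨hplP, hlxl θ', by rw [hlyl θ']; exact h5⟩
    set C4 : Set ((ℝ × ℝ) × SqSide) :=
      {(pt, SqSide.top), (pr, SqSide.right), (pb, SqSide.bottom), (pl, SqSide.left)} with hC4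
    have hC4sub : C4 ⊆ contactPairs P (Sq θ') := by
      intro x hx
      simp only [hC4, Set.mem_insert_iff, Set.mem_singleton_iff] at hx
      rcases hx with rfl | rfl | rfl | rfl
      exacts [hct, hcr, hcb, hcl]
    have hC4card : C4.ncard = 4 := by
      rw [hC4]
      rw [Set.ncard_insert_of_notMem (by simp) ((Set.finite_singleton _).insert _ |>.insert _),
        Set.ncard_insert_of_notMem (by simp) ((Set.finite_singleton _).insert _),
        Set.ncard_insert_of_notMem (by simp) (Set.finite_singleton _),
        Set.ncard_singleton]
    have finish5 : ∀ x : (ℝ × ℝ) × SqSide, x ∈ contactPairs P (Sq θ') → x ∉ C4 → False := by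
      intro x hx hxC
      exact no_five hP (cen θ') (rr θ') θ' h1 hI.1 hI.2 C4 hC4sub hC4card x hx hxC
    -- find the tight constraint
    have hex : rr θ' = 0 ∨ |xT θ'| = rr θ' ∨ |xB θ'| = rr θ' ∨ |yR θ'| = rr θ' ∨
        |yL θ'| = rr θ' := by
      by_contra hno
      push_neg at hno
      obtain ⟨e1, e2, e3, e4, e5⟩ := hno
      have : 0 < g θ' := by
        simp only [hg]
        have a1 : 0 < rr θ' := lt_of_le_of_ne h1 (Ne.symm e1)
        refine lt_min (by linarith) (lt_min ?_ (lt_min ?_ (lt_min ?_ ?_))) <;>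
          [skip; skip; skip; skip] <;>
          first
            | (have := lt_of_le_of_ne h2 e2; linarith)
            | (have := lt_of_le_of_ne h3 e3; linarith)
            | (have := lt_of_le_of_ne h4 e4; linarith)
            | (have := lt_of_le_of_ne h5 e5; linarith)
      linarith
    rcases hex with hz | hz | hz | hz | hz
    · -- the square degenerates to a point: contradiction with w ≠ 0
      have ha : xT θ' = 0 := by have := abs_le.1 h2; rw [hz] at this; linarith [this.1, this.2]
      have hb' : xB θ' = 0 := by have := abs_le.1 h3; rw [hz] at this; linarith [this.1, this.2]
      have hew : w1 * Real.cos θ' + w2 * Real.sin θ' = 0 := by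
        have : xT θ' - xB θ' = Real.cos θ' * w1 + Real.sin θ' * w2 := by
          simp only [hxT, hxB, hw1, hw2]; ring
        rw [ha, hb'] at this
        linarith
      have hfw : -w1 * Real.sin θ' + w2 * Real.cos θ' = 0 := by
        have : rr θ' = (-Real.sin θ' * w1 + Real.cos θ' * w2) / 2 := by simp only [hrr]
        rw [hz] at this
        linear_combination (-2) * this
      exact hw (eq_of_dot_eq_zero θ' w1 w2 hew hfw)
    · rcases (abs_eq h1).1 hz with h | h
      · exact finish5 (pt, SqSide.right)
          ⟨hptP, by rw [hlxt θ', h], by rw [hlyt θ', abs_of_nonneg h1]⟩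
          (by simp [hC4, Prod.ext_iff, htr, htl])
      · exact finish5 (pt, SqSide.left)
          ⟨hptP, by rw [hlxt θ', h], by rw [hlyt θ', abs_of_nonneg h1]⟩
          (by simp [hC4, Prod.ext_iff, htr, htl])
    · rcases (abs_eq h1).1 hz with h | h
      · exact finish5 (pb, SqSide.right)
          ⟨hpbP, by rw [hlxb θ', h], by rw [hlyb θ', abs_neg, abs_of_nonneg h1]⟩
          (by simp [hC4, Prod.ext_iff, hbr, hbl])
      · exact finish5 (pb, SqSide.left)
          ⟨hpbP, by rw [hlxb θ', h], by rw [hlyb θ', abs_neg, abs_of_nonneg h1]⟩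
          (by simp [hC4, Prod.ext_iff, hbr, hbl])
    · rcases (abs_eq h1).1 hz with h | h
      · exact finish5 (pr, SqSide.top)
          ⟨hprP, by rw [hlyr θ', h], by rw [hlxr θ', abs_of_nonneg h1]⟩
          (by simp [hC4, Prod.ext_iff, Ne.symm htr, Ne.symm hbr])
      · exact finish5 (pr, SqSide.bottom)
          ⟨hprP, by rw [hlyr θ', h], by rw [hlxr θ', abs_of_nonneg h1]⟩
          (by simp [hC4, Prod.ext_iff, Ne.symm htr, Ne.symm hbr])
    · rcases (abs_eq h1).1 hz with h | h
      · exact finish5 (pl, SqSide.top)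
          ⟨hplP, by rw [hlyl θ', h], by rw [hlxl θ', abs_neg, abs_of_nonneg h1]⟩
          (by simp [hC4, Prod.ext_iff, Ne.symm htl, Ne.symm hbl])
      · exact finish5 (pl, SqSide.bottom)
          ⟨hplP, by rw [hlyl θ', h], by rw [hlxl θ', abs_neg, abs_of_nonneg h1]⟩
          (by simp [hC4, Prod.ext_iff, Ne.symm htl, Ne.symm hbl])
  · -- no tight configuration: the constraints are strict on all of [0, π/2]
    push_neg at hzero
    have hpos : ∀ θ' ∈ Set.Icc (0:ℝ) (Real.pi / 2), 0 < g θ' := by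
      intro θ' hI
      rcases lt_trichotomy (g θ') 0 with hlt | heq | hgt
      · exfalso
        rcases le_total θ' θ₀ with hle | hle
        · have hsub : Set.Icc (g θ') (g θ₀) ⊆ g '' Set.Icc θ' θ₀ :=
            intermediate_value_Icc hle hgcont.continuousOn
          obtain ⟨θ'', hθ'', h0⟩ := hsub ⟨hlt.le, hg0⟩
          exact hzero θ'' ⟨le_trans hI.1 hθ''.1, le_trans hθ''.2 hθ₀I.2⟩ h0
        · have hsub : Set.Icc (g θ') (g θ₀) ⊆ g '' Set.Icc θ₀ θ' :=
            intermediate_value_Icc' hle hgcont.continuousOn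
          obtain ⟨θ'', hθ'', h0⟩ := hsub ⟨hlt.le, hg0⟩
          exact hzero θ'' ⟨le_trans hθ₀I.1 hθ''.1, le_trans hθ''.2 hI.2⟩ h0
      · exact absurd heq (hzero θ' hI)
      · exact hgt
    have hat0 : 0 < g 0 := hpos 0 ⟨le_refl 0, hπ.le⟩
    have hatp : 0 < g (Real.pi / 2) := hpos (Real.pi / 2) ⟨hπ.le, le_refl _⟩
    -- unpack the strict inequalities at the endpoints
    have k1 : 0 < rr 0 := by linarith [hc1 0]
    have k2 : |xT 0| < rr 0 := by linarith [hc2 0]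
    have k3 : |xB 0| < rr 0 := by linarith [hc3 0]
    have k4 : 0 < rr (Real.pi / 2) := by linarith [hc1 (Real.pi / 2)]
    have k5 : |xT (Real.pi / 2)| < rr (Real.pi / 2) := by linarith [hc2 (Real.pi / 2)]
    have k6 : |xB (Real.pi / 2)| < rr (Real.pi / 2) := by linarith [hc3 (Real.pi / 2)]
    have er0 : rr 0 = w2 / 2 := by simp [hrr]
    have erp : rr (Real.pi / 2) = -w1 / 2 := by simp [hrr]
    have exT0 : xT 0 = pt.1 - m1 := by simp [hxT]
    have exB0 : xB 0 = pb.1 - m1 := by simp [hxB]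
    have exTp : xT (Real.pi / 2) = pt.2 - m2 := by simp [hxT]
    have exBp : xB (Real.pi / 2) = pb.2 - m2 := by simp [hxB]
    rw [er0, exT0] at k2
    rw [er0, exB0] at k3
    rw [erp, exTp] at k5
    rw [erp, exBp] at k6
    rw [abs_lt] at k2 k3 k5 k6
    have hwd1 : pt.1 - pb.1 = w1 := by rw [hw1]
    have hwd2 : pt.2 - pb.2 = w2 := by rw [hw2]
    linarith [k2.1, k2.2, k3.1, k3.2, k5.1, k5.2, k6.1, k6.2]

end GP2Aux

namespace GP2Aux

lemma theta_eq_side (S S' : Square) (hV : S.Valid) (hV' : S'.Valid) (a : SqSide)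
    (p q : ℝ × ℝ) (hpq : p ≠ q) (hp : S.OnSide a p) (hq : S.OnSide a q)
    (hp' : S'.OnSide a p) (hq' : S'.OnSide a q) : S.θ = S'.θ := by
  have hwne : ((p.1 - q.1, p.2 - q.2) : ℝ × ℝ) ≠ (0, 0) := by
    intro h
    rw [Prod.ext_iff] at h
    simp only at h
    apply hpq
    rw [Prod.ext_iff]
    constructor <;> linarith [h.1, h.2]
  apply theta_eq_of_det_zero hV.2.1 hV.2.2 hV'.2.1 hV'.2.2
  cases a
  · -- top
    have e1 := ly_sub S p q; rw [hp.1, hq.1] at e1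
    have e2 := ly_sub S' p q; rw [hp'.1, hq'.1] at e2
    have h1 : (-Real.sin S.θ) * (p.1 - q.1) + Real.cos S.θ * (p.2 - q.2) = 0 := by linarith
    have h2 : (-Real.sin S'.θ) * (p.1 - q.1) + Real.cos S'.θ * (p.2 - q.2) = 0 := by linarith
    have := parallel_of_perp hwne h1 h2
    linarith
  · -- right
    have e1 := lx_sub S p q; rw [hp.1, hq.1] at e1
    have e2 := lx_sub S' p q; rw [hp'.1, hq'.1] at e2
    have h1 : Real.cos S.θ * (p.1 - q.1) + Real.sin S.θ * (p.2 - q.2) = 0 := by linarith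
    have h2 : Real.cos S'.θ * (p.1 - q.1) + Real.sin S'.θ * (p.2 - q.2) = 0 := by linarith
    have := parallel_of_perp hwne h1 h2
    linarith
  · -- bottom
    have e1 := ly_sub S p q; rw [hp.1, hq.1] at e1
    have e2 := ly_sub S' p q; rw [hp'.1, hq'.1] at e2
    have h1 : (-Real.sin S.θ) * (p.1 - q.1) + Real.cos S.θ * (p.2 - q.2) = 0 := by linarith
    have h2 : (-Real.sin S'.θ) * (p.1 - q.1) + Real.cos S'.θ * (p.2 - q.2) = 0 := by linarith
    have := parallel_of_perp hwne h1 h2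
    linarith
  · -- left
    have e1 := lx_sub S p q; rw [hp.1, hq.1] at e1
    have e2 := lx_sub S' p q; rw [hp'.1, hq'.1] at e2
    have h1 : Real.cos S.θ * (p.1 - q.1) + Real.sin S.θ * (p.2 - q.2) = 0 := by linarith
    have h2 : Real.cos S'.θ * (p.1 - q.1) + Real.sin S'.θ * (p.2 - q.2) = 0 := by linarith
    have := parallel_of_perp hwne h1 h2
    linarith

lemma line_eq_T (S S' : Square) (hθ : S.θ = S'.θ) {p : ℝ × ℝ}
    (hp : S.OnSide SqSide.top p) (hp' : S'.OnSide SqSide.top p) :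
    S.r - S'.r = -(S'.center.1 - S.center.1) * Real.sin S.θ
      + (S'.center.2 - S.center.2) * Real.cos S.θ := by
  have := ly_diff_center S S' hθ p
  rw [hp.1, hp'.1] at this
  linarith

lemma line_eq_B (S S' : Square) (hθ : S.θ = S'.θ) {p : ℝ × ℝ}
    (hp : S.OnSide SqSide.bottom p) (hp' : S'.OnSide SqSide.bottom p) :
    S'.r - S.r = -(S'.center.1 - S.center.1) * Real.sin S.θ
      + (S'.center.2 - S.center.2) * Real.cos S.θ := by
  have := ly_diff_center S S' hθ p
  rw [hp.1, hp'.1] at this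
  linarith

lemma line_eq_R (S S' : Square) (hθ : S.θ = S'.θ) {p : ℝ × ℝ}
    (hp : S.OnSide SqSide.right p) (hp' : S'.OnSide SqSide.right p) :
    S.r - S'.r = (S'.center.1 - S.center.1) * Real.cos S.θ
      + (S'.center.2 - S.center.2) * Real.sin S.θ := by
  have := lx_diff_center S S' hθ p
  rw [hp.1, hp'.1] at this
  linarith

lemma line_eq_L (S S' : Square) (hθ : S.θ = S'.θ) {p : ℝ × ℝ}
    (hp : S.OnSide SqSide.left p) (hp' : S'.OnSide SqSide.left p) :
    S'.r - S.r = (S'.center.1 - S.center.1) * Real.cos S.θ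
      + (S'.center.2 - S.center.2) * Real.sin S.θ := by
  have := lx_diff_center S S' hθ p
  rw [hp.1, hp'.1] at this
  linarith

lemma sq_eq_of (S S' : Square) (hθ : S.θ = S'.θ) (hrr : S.r = S'.r)
    (h1 : (S'.center.1 - S.center.1) * Real.cos S.θ + (S'.center.2 - S.center.2) * Real.sin S.θ = 0)
    (h2 : -(S'.center.1 - S.center.1) * Real.sin S.θ
      + (S'.center.2 - S.center.2) * Real.cos S.θ = 0) : S = S' := by
  obtain ⟨hz1, hz2⟩ := eq_of_dot_eq_zero S.θ _ _ h1 h2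
  have hc : S.center = S'.center := by
    rw [Prod.ext_iff]
    constructor <;> linarith
  cases S; cases S'
  simp_all

end GP2Aux

namespace GP2Aux

set_option maxHeartbeats 1600000 in
/-- Key uniqueness: a positive-radius square with exactly four contact pairs is
determined by its contact-pair set. -/
lemma key_unique {P : Finset (ℝ × ℝ)} (hP : GenPos P) (S S' : Square)
    (hV : S.Valid) (hr : 0 < S.r) (hV' : S'.Valid) (hr' : 0 < S'.r)
    (h4 : (contactPairs P S).ncard = 4)
    (hEq : contactPairs P S = contactPairs P S') : S = S' := by
  classical
  have hsideTB : (¬∃ p : ℝ × ℝ, (p, SqSide.right) ∈ contactPairs P S) →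
      (¬∃ p : ℝ × ℝ, (p, SqSide.left) ∈ contactPairs P S) → False := by
    intro h1 h2
    apply slide_TB hP S hV (contactPairs P S) (subset_refl _) h4
    rintro ⟨p, a⟩ hx
    cases a
    · exact Or.inl rfl
    · exact absurd ⟨p, hx⟩ h1
    · exact Or.inr rfl
    · exact absurd ⟨p, hx⟩ h2
  have hsideLR : (¬∃ p : ℝ × ℝ, (p, SqSide.top) ∈ contactPairs P S) →
      (¬∃ p : ℝ × ℝ, (p, SqSide.bottom) ∈ contactPairs P S) → False := by
    intro h1 h2
    apply slide_LR hP S hV (contactPairs P S) (subset_refl _) h4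
    rintro ⟨p, a⟩ hx
    cases a
    · exact absurd ⟨p, hx⟩ h1
    · exact Or.inr rfl
    · exact absurd ⟨p, hx⟩ h2
    · exact Or.inl rfl
  have hsideTR : (¬∃ p : ℝ × ℝ, (p, SqSide.bottom) ∈ contactPairs P S) →
      (¬∃ p : ℝ × ℝ, (p, SqSide.left) ∈ contactPairs P S) → False := by
    intro h1 h2
    apply slide_TR hP S hV (contactPairs P S) (subset_refl _) h4
    rintro ⟨p, a⟩ hx
    cases a
    · exact Or.inl rfl
    · exact Or.inr rfl
    · exact absurd ⟨p, hx⟩ h1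
    · exact absurd ⟨p, hx⟩ h2
  have hsideTL : (¬∃ p : ℝ × ℝ, (p, SqSide.bottom) ∈ contactPairs P S) →
      (¬∃ p : ℝ × ℝ, (p, SqSide.right) ∈ contactPairs P S) → False := by
    intro h1 h2
    apply slide_TL hP S hV (contactPairs P S) (subset_refl _) h4
    rintro ⟨p, a⟩ hx
    cases a
    · exact Or.inl rfl
    · exact absurd ⟨p, hx⟩ h2
    · exact absurd ⟨p, hx⟩ h1
    · exact Or.inr rfl
  have hsideBR : (¬∃ p : ℝ × ℝ, (p, SqSide.top) ∈ contactPairs P S) →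
      (¬∃ p : ℝ × ℝ, (p, SqSide.left) ∈ contactPairs P S) → False := by
    intro h1 h2
    apply slide_BR hP S hV (contactPairs P S) (subset_refl _) h4
    rintro ⟨p, a⟩ hx
    cases a
    · exact absurd ⟨p, hx⟩ h1
    · exact Or.inr rfl
    · exact Or.inl rfl
    · exact absurd ⟨p, hx⟩ h2
  have hsideBL : (¬∃ p : ℝ × ℝ, (p, SqSide.top) ∈ contactPairs P S) →
      (¬∃ p : ℝ × ℝ, (p, SqSide.right) ∈ contactPairs P S) → False := by
    intro h1 h2
    apply slide_BL hP S hV (contactPairs P S) (subset_refl _) h4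
    rintro ⟨p, a⟩ hx
    cases a
    · exact absurd ⟨p, hx⟩ h1
    · exact absurd ⟨p, hx⟩ h2
    · exact Or.inl rfl
    · exact Or.inr rfl
  by_cases hT : ∃ p : ℝ × ℝ, (p, SqSide.top) ∈ contactPairs P S
  · by_cases hR : ∃ p : ℝ × ℝ, (p, SqSide.right) ∈ contactPairs P S
    · by_cases hB : ∃ p : ℝ × ℝ, (p, SqSide.bottom) ∈ contactPairs P S
      · by_cases hL : ∃ p : ℝ × ℝ, (p, SqSide.left) ∈ contactPairs P S
        · -- all four sides occupied
          obtain ⟨pt, hptC⟩ := hT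
          have hOT : S.OnSide SqSide.top pt := hptC.2
          have hOT' : S'.OnSide SqSide.top pt := (hEq ▸ hptC).2
          obtain ⟨pr, hprC⟩ := hR
          have hOR : S.OnSide SqSide.right pr := hprC.2
          have hOR' : S'.OnSide SqSide.right pr := (hEq ▸ hprC).2
          obtain ⟨pb, hpbC⟩ := hB
          have hOB : S.OnSide SqSide.bottom pb := hpbC.2
          have hOB' : S'.OnSide SqSide.bottom pb := (hEq ▸ hpbC).2
          obtain ⟨pl, hplC⟩ := hL
          have hOL : S.OnSide SqSide.left pl := hplC.2
          have hOL' : S'.OnSide SqSide.left pl := (hEq ▸ hplC).2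
          by_cases hθeq : S.θ = S'.θ
          · have eqT := line_eq_T S S' hθeq hOT hOT'
            have eqB := line_eq_B S S' hθeq hOB hOB'
            have eqR := line_eq_R S S' hθeq hOR hOR'
            exact sq_eq_of S S' hθeq (by linarith) (by linarith) (by linarith)
          exfalso
          have hdet : ¬(Real.sin S'.θ * Real.cos S.θ - Real.cos S'.θ * Real.sin S.θ = 0) := by
            intro h
            exact hθeq (theta_eq_of_det_zero hV.2.1 hV.2.2 hV'.2.1 hV'.2.2 h)
          have hEd : Real.cos S.θ * (pr.1 - pl.1) + Real.sin S.θ * (pr.2 - pl.2) = 2 * S.r := by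
            have := lx_sub S pr pl; rw [hOR.1, hOL.1] at this; linarith
          have hFw : -Real.sin S.θ * (pt.1 - pb.1) + Real.cos S.θ * (pt.2 - pb.2) = 2 * S.r := by
            have := ly_sub S pt pb; rw [hOT.1, hOB.1] at this; linarith
          have hEd' : Real.cos S'.θ * (pr.1 - pl.1) + Real.sin S'.θ * (pr.2 - pl.2) = 2 * S'.r := by
            have := lx_sub S' pr pl; rw [hOR'.1, hOL'.1] at this; linarith
          have hFw' : -Real.sin S'.θ * (pt.1 - pb.1) + Real.cos S'.θ * (pt.2 - pb.2) = 2 * S'.r := by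
            have := ly_sub S' pt pb; rw [hOT'.1, hOB'.1] at this; linarith
          have hAB : ((pr.1 - pl.1) - (pt.2 - pb.2)) * Real.cos S.θ
              + ((pr.2 - pl.2) + (pt.1 - pb.1)) * Real.sin S.θ = 0 := by
            linear_combination hEd - hFw
          have hAB' : ((pr.1 - pl.1) - (pt.2 - pb.2)) * Real.cos S'.θ
              + ((pr.2 - pl.2) + (pt.1 - pb.1)) * Real.sin S'.θ = 0 := by
            linear_combination hEd' - hFw'
          have hA0 : (pr.1 - pl.1) - (pt.2 - pb.2) = 0 := by
            have hh : ((pr.1 - pl.1) - (pt.2 - pb.2))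
                * (Real.sin S'.θ * Real.cos S.θ - Real.cos S'.θ * Real.sin S.θ) = 0 := by
              linear_combination Real.sin S'.θ * hAB - Real.sin S.θ * hAB'
            rcases mul_eq_zero.1 hh with h | h
            · exact h
            · exact absurd h hdet
          have hB0 : (pr.2 - pl.2) + (pt.1 - pb.1) = 0 := by
            have hh : ((pr.2 - pl.2) + (pt.1 - pb.1))
                * (Real.sin S'.θ * Real.cos S.θ - Real.cos S'.θ * Real.sin S.θ) = 0 := by
              linear_combination (-Real.cos S'.θ) * hAB + Real.cos S.θ * hAB'
            rcases mul_eq_zero.1 hh with h | h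
            · exact h
            · exact absurd h hdet
          by_cases htpb : pt = pb
          · have e1 := hOT.1
            have e2 := hOB.1
            rw [htpb] at e1
            linarith
          by_cases hrpl : pr = pl
          · have e1 := hOR.1
            have e2 := hOL.1
            rw [hrpl] at e1
            linarith
          have hwne : ((pt.1 - pb.1, pt.2 - pb.2) : ℝ × ℝ) ≠ (0, 0) := by
            intro h
            rw [Prod.ext_iff] at h
            simp only at h
            rw [h.1, h.2] at hFw
            simp at hFw
            linarith

          by_cases htb_r : pt = pr
          · -- shared corner tb_r
            exfalso
            have q1 : Real.cos S.θ * (pt.1 - pb.1) + Real.sin S.θ * (pt.2 - pb.2)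
                = S.lx pt - S.lx pb := by
              have := lx_sub S pt pb; linarith
            have q4 : -Real.sin S.θ * (pr.1 - pl.1) + Real.cos S.θ * (pr.2 - pl.2)
                = S.ly pr - S.ly pl := by
              have := ly_sub S pr pl; linarith
            have q7 : (-Real.sin S.θ * (pr.1 - pl.1) + Real.cos S.θ * (pr.2 - pl.2))
                + (Real.cos S.θ * (pt.1 - pb.1) + Real.sin S.θ * (pt.2 - pb.2)) = 0 := by
              linear_combination (-Real.sin S.θ) * hA0 + Real.cos S.θ * hB0
            have ce1 : S.lx pt = S.r := by rw [htb_r]; exact hOR.1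
            have ce2 : S.ly pr = S.r := by rw [← htb_r]; exact hOT.1
            have h1 : Real.cos S.θ * (pt.1 - pb.1) + Real.sin S.θ * (pt.2 - pb.2) = 0 := by
              have b1 := abs_le.1 hOT.2
              have b2 := abs_le.1 hOB.2
              have b3 := abs_le.1 hOR.2
              have b4 := abs_le.1 hOL.2
              linarith [b1.1, b1.2, b2.1, b2.2, b3.1, b3.2, b4.1, b4.2]
            have q1' : Real.cos S'.θ * (pt.1 - pb.1) + Real.sin S'.θ * (pt.2 - pb.2)
                = S'.lx pt - S'.lx pb := by
              have := lx_sub S' pt pb; linarith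
            have q4' : -Real.sin S'.θ * (pr.1 - pl.1) + Real.cos S'.θ * (pr.2 - pl.2)
                = S'.ly pr - S'.ly pl := by
              have := ly_sub S' pr pl; linarith
            have q7' : (-Real.sin S'.θ * (pr.1 - pl.1) + Real.cos S'.θ * (pr.2 - pl.2))
                + (Real.cos S'.θ * (pt.1 - pb.1) + Real.sin S'.θ * (pt.2 - pb.2)) = 0 := by
              linear_combination (-Real.sin S'.θ) * hA0 + Real.cos S'.θ * hB0
            have ce1' : S'.lx pt = S'.r := by rw [htb_r]; exact hOR'.1
            have ce2' : S'.ly pr = S'.r := by rw [← htb_r]; exact hOT'.1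
            have h1' : Real.cos S'.θ * (pt.1 - pb.1) + Real.sin S'.θ * (pt.2 - pb.2) = 0 := by
              have b1 := abs_le.1 hOT'.2
              have b2 := abs_le.1 hOB'.2
              have b3 := abs_le.1 hOR'.2
              have b4 := abs_le.1 hOL'.2
              linarith [b1.1, b1.2, b2.1, b2.2, b3.1, b3.2, b4.1, b4.2]
            have hd0 := parallel_of_perp hwne h1 h1'
            exact hdet (by linarith)

          by_cases htb_l : pt = pl
          · -- shared corner tb_l
            exfalso
            have q1 : Real.cos S.θ * (pt.1 - pb.1) + Real.sin S.θ * (pt.2 - pb.2)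
                = S.lx pt - S.lx pb := by
              have := lx_sub S pt pb; linarith
            have q4 : -Real.sin S.θ * (pr.1 - pl.1) + Real.cos S.θ * (pr.2 - pl.2)
                = S.ly pr - S.ly pl := by
              have := ly_sub S pr pl; linarith
            have q7 : (-Real.sin S.θ * (pr.1 - pl.1) + Real.cos S.θ * (pr.2 - pl.2))
                + (Real.cos S.θ * (pt.1 - pb.1) + Real.sin S.θ * (pt.2 - pb.2)) = 0 := by
              linear_combination (-Real.sin S.θ) * hA0 + Real.cos S.θ * hB0
            have ce1 : S.lx pt = -S.r := by rw [htb_l]; exact hOL.1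
            have ce2 : S.ly pl = S.r := by rw [← htb_l]; exact hOT.1
            have h1 : Real.cos S.θ * (pt.1 - pb.1) + Real.sin S.θ * (pt.2 - pb.2) = 0 := by
              have b1 := abs_le.1 hOT.2
              have b2 := abs_le.1 hOB.2
              have b3 := abs_le.1 hOR.2
              have b4 := abs_le.1 hOL.2
              linarith [b1.1, b1.2, b2.1, b2.2, b3.1, b3.2, b4.1, b4.2]
            have q1' : Real.cos S'.θ * (pt.1 - pb.1) + Real.sin S'.θ * (pt.2 - pb.2)
                = S'.lx pt - S'.lx pb := by
              have := lx_sub S' pt pb; linarith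
            have q4' : -Real.sin S'.θ * (pr.1 - pl.1) + Real.cos S'.θ * (pr.2 - pl.2)
                = S'.ly pr - S'.ly pl := by
              have := ly_sub S' pr pl; linarith
            have q7' : (-Real.sin S'.θ * (pr.1 - pl.1) + Real.cos S'.θ * (pr.2 - pl.2))
                + (Real.cos S'.θ * (pt.1 - pb.1) + Real.sin S'.θ * (pt.2 - pb.2)) = 0 := by
              linear_combination (-Real.sin S'.θ) * hA0 + Real.cos S'.θ * hB0
            have ce1' : S'.lx pt = -S'.r := by rw [htb_l]; exact hOL'.1
            have ce2' : S'.ly pl = S'.r := by rw [← htb_l]; exact hOT'.1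
            have h1' : Real.cos S'.θ * (pt.1 - pb.1) + Real.sin S'.θ * (pt.2 - pb.2) = 0 := by
              have b1 := abs_le.1 hOT'.2
              have b2 := abs_le.1 hOB'.2
              have b3 := abs_le.1 hOR'.2
              have b4 := abs_le.1 hOL'.2
              linarith [b1.1, b1.2, b2.1, b2.2, b3.1, b3.2, b4.1, b4.2]
            have hd0 := parallel_of_perp hwne h1 h1'
            exact hdet (by linarith)

          by_cases hbb_r : pb = pr
          · -- shared corner bb_r
            exfalso
            have q1 : Real.cos S.θ * (pt.1 - pb.1) + Real.sin S.θ * (pt.2 - pb.2)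
                = S.lx pt - S.lx pb := by
              have := lx_sub S pt pb; linarith
            have q4 : -Real.sin S.θ * (pr.1 - pl.1) + Real.cos S.θ * (pr.2 - pl.2)
                = S.ly pr - S.ly pl := by
              have := ly_sub S pr pl; linarith
            have q7 : (-Real.sin S.θ * (pr.1 - pl.1) + Real.cos S.θ * (pr.2 - pl.2))
                + (Real.cos S.θ * (pt.1 - pb.1) + Real.sin S.θ * (pt.2 - pb.2)) = 0 := by
              linear_combination (-Real.sin S.θ) * hA0 + Real.cos S.θ * hB0
            have ce1 : S.lx pb = S.r := by rw [hbb_r]; exact hOR.1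
            have ce2 : S.ly pr = -S.r := by rw [← hbb_r]; exact hOB.1
            have h1 : Real.cos S.θ * (pt.1 - pb.1) + Real.sin S.θ * (pt.2 - pb.2) = 0 := by
              have b1 := abs_le.1 hOT.2
              have b2 := abs_le.1 hOB.2
              have b3 := abs_le.1 hOR.2
              have b4 := abs_le.1 hOL.2
              linarith [b1.1, b1.2, b2.1, b2.2, b3.1, b3.2, b4.1, b4.2]
            have q1' : Real.cos S'.θ * (pt.1 - pb.1) + Real.sin S'.θ * (pt.2 - pb.2)
                = S'.lx pt - S'.lx pb := by
              have := lx_sub S' pt pb; linarith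
            have q4' : -Real.sin S'.θ * (pr.1 - pl.1) + Real.cos S'.θ * (pr.2 - pl.2)
                = S'.ly pr - S'.ly pl := by
              have := ly_sub S' pr pl; linarith
            have q7' : (-Real.sin S'.θ * (pr.1 - pl.1) + Real.cos S'.θ * (pr.2 - pl.2))
                + (Real.cos S'.θ * (pt.1 - pb.1) + Real.sin S'.θ * (pt.2 - pb.2)) = 0 := by
              linear_combination (-Real.sin S'.θ) * hA0 + Real.cos S'.θ * hB0
            have ce1' : S'.lx pb = S'.r := by rw [hbb_r]; exact hOR'.1
            have ce2' : S'.ly pr = -S'.r := by rw [← hbb_r]; exact hOB'.1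
            have h1' : Real.cos S'.θ * (pt.1 - pb.1) + Real.sin S'.θ * (pt.2 - pb.2) = 0 := by
              have b1 := abs_le.1 hOT'.2
              have b2 := abs_le.1 hOB'.2
              have b3 := abs_le.1 hOR'.2
              have b4 := abs_le.1 hOL'.2
              linarith [b1.1, b1.2, b2.1, b2.2, b3.1, b3.2, b4.1, b4.2]
            have hd0 := parallel_of_perp hwne h1 h1'
            exact hdet (by linarith)

          by_cases hbb_l : pb = pl
          · -- shared corner bb_l
            exfalso
            have q1 : Real.cos S.θ * (pt.1 - pb.1) + Real.sin S.θ * (pt.2 - pb.2)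
                = S.lx pt - S.lx pb := by
              have := lx_sub S pt pb; linarith
            have q4 : -Real.sin S.θ * (pr.1 - pl.1) + Real.cos S.θ * (pr.2 - pl.2)
                = S.ly pr - S.ly pl := by
              have := ly_sub S pr pl; linarith
            have q7 : (-Real.sin S.θ * (pr.1 - pl.1) + Real.cos S.θ * (pr.2 - pl.2))
                + (Real.cos S.θ * (pt.1 - pb.1) + Real.sin S.θ * (pt.2 - pb.2)) = 0 := by
              linear_combination (-Real.sin S.θ) * hA0 + Real.cos S.θ * hB0
            have ce1 : S.lx pb = -S.r := by rw [hbb_l]; exact hOL.1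
            have ce2 : S.ly pl = -S.r := by rw [← hbb_l]; exact hOB.1
            have h1 : Real.cos S.θ * (pt.1 - pb.1) + Real.sin S.θ * (pt.2 - pb.2) = 0 := by
              have b1 := abs_le.1 hOT.2
              have b2 := abs_le.1 hOB.2
              have b3 := abs_le.1 hOR.2
              have b4 := abs_le.1 hOL.2
              linarith [b1.1, b1.2, b2.1, b2.2, b3.1, b3.2, b4.1, b4.2]
            have q1' : Real.cos S'.θ * (pt.1 - pb.1) + Real.sin S'.θ * (pt.2 - pb.2)
                = S'.lx pt - S'.lx pb := by
              have := lx_sub S' pt pb; linarith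
            have q4' : -Real.sin S'.θ * (pr.1 - pl.1) + Real.cos S'.θ * (pr.2 - pl.2)
                = S'.ly pr - S'.ly pl := by
              have := ly_sub S' pr pl; linarith
            have q7' : (-Real.sin S'.θ * (pr.1 - pl.1) + Real.cos S'.θ * (pr.2 - pl.2))
                + (Real.cos S'.θ * (pt.1 - pb.1) + Real.sin S'.θ * (pt.2 - pb.2)) = 0 := by
              linear_combination (-Real.sin S'.θ) * hA0 + Real.cos S'.θ * hB0
            have ce1' : S'.lx pb = -S'.r := by rw [hbb_l]; exact hOL'.1
            have ce2' : S'.ly pl = -S'.r := by rw [← hbb_l]; exact hOB'.1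
            have h1' : Real.cos S'.θ * (pt.1 - pb.1) + Real.sin S'.θ * (pt.2 - pb.2) = 0 := by
              have b1 := abs_le.1 hOT'.2
              have b2 := abs_le.1 hOB'.2
              have b3 := abs_le.1 hOR'.2
              have b4 := abs_le.1 hOL'.2
              linarith [b1.1, b1.2, b2.1, b2.2, b3.1, b3.2, b4.1, b4.2]
            have hd0 := parallel_of_perp hwne h1 h1'
            exact hdet (by linarith)
          -- no shared corners: the rotating family argument
          exact no_share_case hP S hV hr pt pr pb pl hptC.1 hprC.1 hpbC.1 hplC.1
            hOT hOR hOB hOL htb_r htb_l hbb_r hbb_l (by linarith) (by linarith)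
        · -- missing left

          have hCfin : (contactPairs P S).Finite := cp_finite P S
          have hmaps : ∀ x ∈ hCfin.toFinset, x.2 ∈ ({SqSide.top, SqSide.right, SqSide.bottom} : Finset SqSide) := by
            intro x hx
            have hx' := hCfin.mem_toFinset.1 hx
            obtain ⟨p, a⟩ := x
            cases a
            · simp
            · simp
            · simp
            · exact absurd ⟨p, hx'⟩ hL
          have hcard : ({SqSide.top, SqSide.right, SqSide.bottom} : Finset SqSide).card < hCfin.toFinset.card := by
            have hh : hCfin.toFinset.card = 4 := by
              rw [← Set.ncard_eq_toFinset_card _ hCfin]; exact h4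
            rw [hh]; decide
          obtain ⟨x, hx, y, hy, hxy, hsnd⟩ :=
            Finset.exists_ne_map_eq_of_card_lt_of_maps_to hcard hmaps
          have hxC : x ∈ contactPairs P S := hCfin.mem_toFinset.1 hx
          have hyC : y ∈ contactPairs P S := hCfin.mem_toFinset.1 hy
          have hpq : x.1 ≠ y.1 := by
            intro h
            exact hxy (Prod.ext h hsnd)
          have hxC' : x ∈ contactPairs P S' := hEq ▸ hxC
          have hyC' : y ∈ contactPairs P S' := hEq ▸ hyC
          have hOy : S.OnSide x.2 y.1 := by have h := hyC.2; rwa [← hsnd] at h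
          have hOy' : S'.OnSide x.2 y.1 := by have h := hyC'.2; rwa [← hsnd] at h
          have hθ : S.θ = S'.θ :=
            theta_eq_side S S' hV hV' x.2 x.1 y.1 hpq hxC.2 hOy hxC'.2 hOy'
          obtain ⟨pt, hptC⟩ := hT
          have hOT : S.OnSide SqSide.top pt := hptC.2
          have hOT' : S'.OnSide SqSide.top pt := (hEq ▸ hptC).2
          obtain ⟨pr, hprC⟩ := hR
          have hOR : S.OnSide SqSide.right pr := hprC.2
          have hOR' : S'.OnSide SqSide.right pr := (hEq ▸ hprC).2
          obtain ⟨pb, hpbC⟩ := hB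
          have hOB : S.OnSide SqSide.bottom pb := hpbC.2
          have hOB' : S'.OnSide SqSide.bottom pb := (hEq ▸ hpbC).2
          have eqT := line_eq_T S S' hθ hOT hOT'
          have eqB := line_eq_B S S' hθ hOB hOB'
          have eqR := line_eq_R S S' hθ hOR hOR'
          exact sq_eq_of S S' hθ (by linarith) (by linarith) (by linarith)
      · by_cases hL : ∃ p : ℝ × ℝ, (p, SqSide.left) ∈ contactPairs P S
        · -- missing bottom

          have hCfin : (contactPairs P S).Finite := cp_finite P S
          have hmaps : ∀ x ∈ hCfin.toFinset, x.2 ∈ ({SqSide.top, SqSide.right, SqSide.left} : Finset SqSide) := by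
            intro x hx
            have hx' := hCfin.mem_toFinset.1 hx
            obtain ⟨p, a⟩ := x
            cases a
            · simp
            · simp
            · exact absurd ⟨p, hx'⟩ hB
            · simp
          have hcard : ({SqSide.top, SqSide.right, SqSide.left} : Finset SqSide).card < hCfin.toFinset.card := by
            have hh : hCfin.toFinset.card = 4 := by
              rw [← Set.ncard_eq_toFinset_card _ hCfin]; exact h4
            rw [hh]; decide
          obtain ⟨x, hx, y, hy, hxy, hsnd⟩ :=
            Finset.exists_ne_map_eq_of_card_lt_of_maps_to hcard hmaps
          have hxC : x ∈ contactPairs P S := hCfin.mem_toFinset.1 hx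
          have hyC : y ∈ contactPairs P S := hCfin.mem_toFinset.1 hy
          have hpq : x.1 ≠ y.1 := by
            intro h
            exact hxy (Prod.ext h hsnd)
          have hxC' : x ∈ contactPairs P S' := hEq ▸ hxC
          have hyC' : y ∈ contactPairs P S' := hEq ▸ hyC
          have hOy : S.OnSide x.2 y.1 := by have h := hyC.2; rwa [← hsnd] at h
          have hOy' : S'.OnSide x.2 y.1 := by have h := hyC'.2; rwa [← hsnd] at h
          have hθ : S.θ = S'.θ :=
            theta_eq_side S S' hV hV' x.2 x.1 y.1 hpq hxC.2 hOy hxC'.2 hOy'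
          obtain ⟨pt, hptC⟩ := hT
          have hOT : S.OnSide SqSide.top pt := hptC.2
          have hOT' : S'.OnSide SqSide.top pt := (hEq ▸ hptC).2
          obtain ⟨pr, hprC⟩ := hR
          have hOR : S.OnSide SqSide.right pr := hprC.2
          have hOR' : S'.OnSide SqSide.right pr := (hEq ▸ hprC).2
          obtain ⟨pl, hplC⟩ := hL
          have hOL : S.OnSide SqSide.left pl := hplC.2
          have hOL' : S'.OnSide SqSide.left pl := (hEq ▸ hplC).2
          have eqT := line_eq_T S S' hθ hOT hOT'
          have eqR := line_eq_R S S' hθ hOR hOR'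
          have eqL := line_eq_L S S' hθ hOL hOL'
          exact sq_eq_of S S' hθ (by linarith) (by linarith) (by linarith)
        · exact (hsideTR hB hL).elim
    · by_cases hB : ∃ p : ℝ × ℝ, (p, SqSide.bottom) ∈ contactPairs P S
      · by_cases hL : ∃ p : ℝ × ℝ, (p, SqSide.left) ∈ contactPairs P S
        · -- missing right

          have hCfin : (contactPairs P S).Finite := cp_finite P S
          have hmaps : ∀ x ∈ hCfin.toFinset, x.2 ∈ ({SqSide.top, SqSide.bottom, SqSide.left} : Finset SqSide) := by
            intro x hx
            have hx' := hCfin.mem_toFinset.1 hx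
            obtain ⟨p, a⟩ := x
            cases a
            · simp
            · exact absurd ⟨p, hx'⟩ hR
            · simp
            · simp
          have hcard : ({SqSide.top, SqSide.bottom, SqSide.left} : Finset SqSide).card < hCfin.toFinset.card := by
            have hh : hCfin.toFinset.card = 4 := by
              rw [← Set.ncard_eq_toFinset_card _ hCfin]; exact h4
            rw [hh]; decide
          obtain ⟨x, hx, y, hy, hxy, hsnd⟩ :=
            Finset.exists_ne_map_eq_of_card_lt_of_maps_to hcard hmaps
          have hxC : x ∈ contactPairs P S := hCfin.mem_toFinset.1 hx
          have hyC : y ∈ contactPairs P S := hCfin.mem_toFinset.1 hy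
          have hpq : x.1 ≠ y.1 := by
            intro h
            exact hxy (Prod.ext h hsnd)
          have hxC' : x ∈ contactPairs P S' := hEq ▸ hxC
          have hyC' : y ∈ contactPairs P S' := hEq ▸ hyC
          have hOy : S.OnSide x.2 y.1 := by have h := hyC.2; rwa [← hsnd] at h
          have hOy' : S'.OnSide x.2 y.1 := by have h := hyC'.2; rwa [← hsnd] at h
          have hθ : S.θ = S'.θ :=
            theta_eq_side S S' hV hV' x.2 x.1 y.1 hpq hxC.2 hOy hxC'.2 hOy'
          obtain ⟨pt, hptC⟩ := hT
          have hOT : S.OnSide SqSide.top pt := hptC.2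
          have hOT' : S'.OnSide SqSide.top pt := (hEq ▸ hptC).2
          obtain ⟨pb, hpbC⟩ := hB
          have hOB : S.OnSide SqSide.bottom pb := hpbC.2
          have hOB' : S'.OnSide SqSide.bottom pb := (hEq ▸ hpbC).2
          obtain ⟨pl, hplC⟩ := hL
          have hOL : S.OnSide SqSide.left pl := hplC.2
          have hOL' : S'.OnSide SqSide.left pl := (hEq ▸ hplC).2
          have eqT := line_eq_T S S' hθ hOT hOT'
          have eqB := line_eq_B S S' hθ hOB hOB'
          have eqL := line_eq_L S S' hθ hOL hOL'
          exact sq_eq_of S S' hθ (by linarith) (by linarith) (by linarith)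
        · exact (hsideTB hR hL).elim
      · exact (hsideTL hB hR).elim
  · by_cases hR : ∃ p : ℝ × ℝ, (p, SqSide.right) ∈ contactPairs P S
    · by_cases hB : ∃ p : ℝ × ℝ, (p, SqSide.bottom) ∈ contactPairs P S
      · by_cases hL : ∃ p : ℝ × ℝ, (p, SqSide.left) ∈ contactPairs P S
        · -- missing top

          have hCfin : (contactPairs P S).Finite := cp_finite P S
          have hmaps : ∀ x ∈ hCfin.toFinset, x.2 ∈ ({SqSide.right, SqSide.bottom, SqSide.left} : Finset SqSide) := by
            intro x hx
            have hx' := hCfin.mem_toFinset.1 hx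
            obtain ⟨p, a⟩ := x
            cases a
            · exact absurd ⟨p, hx'⟩ hT
            · simp
            · simp
            · simp
          have hcard : ({SqSide.right, SqSide.bottom, SqSide.left} : Finset SqSide).card < hCfin.toFinset.card := by
            have hh : hCfin.toFinset.card = 4 := by
              rw [← Set.ncard_eq_toFinset_card _ hCfin]; exact h4
            rw [hh]; decide
          obtain ⟨x, hx, y, hy, hxy, hsnd⟩ :=
            Finset.exists_ne_map_eq_of_card_lt_of_maps_to hcard hmaps
          have hxC : x ∈ contactPairs P S := hCfin.mem_toFinset.1 hx
          have hyC : y ∈ contactPairs P S := hCfin.mem_toFinset.1 hy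
          have hpq : x.1 ≠ y.1 := by
            intro h
            exact hxy (Prod.ext h hsnd)
          have hxC' : x ∈ contactPairs P S' := hEq ▸ hxC
          have hyC' : y ∈ contactPairs P S' := hEq ▸ hyC
          have hOy : S.OnSide x.2 y.1 := by have h := hyC.2; rwa [← hsnd] at h
          have hOy' : S'.OnSide x.2 y.1 := by have h := hyC'.2; rwa [← hsnd] at h
          have hθ : S.θ = S'.θ :=
            theta_eq_side S S' hV hV' x.2 x.1 y.1 hpq hxC.2 hOy hxC'.2 hOy'
          obtain ⟨pr, hprC⟩ := hR
          have hOR : S.OnSide SqSide.right pr := hprC.2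
          have hOR' : S'.OnSide SqSide.right pr := (hEq ▸ hprC).2
          obtain ⟨pb, hpbC⟩ := hB
          have hOB : S.OnSide SqSide.bottom pb := hpbC.2
          have hOB' : S'.OnSide SqSide.bottom pb := (hEq ▸ hpbC).2
          obtain ⟨pl, hplC⟩ := hL
          have hOL : S.OnSide SqSide.left pl := hplC.2
          have hOL' : S'.OnSide SqSide.left pl := (hEq ▸ hplC).2
          have eqR := line_eq_R S S' hθ hOR hOR'
          have eqB := line_eq_B S S' hθ hOB hOB'
          have eqL := line_eq_L S S' hθ hOL hOL'
          exact sq_eq_of S S' hθ (by linarith) (by linarith) (by linarith)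
        · exact (hsideBR hT hL).elim
      · exact (hsideLR hT hB).elim
    · by_cases hB : ∃ p : ℝ × ℝ, (p, SqSide.bottom) ∈ contactPairs P S
      · exact (hsideBL hT hR).elim
      · exact (hsideLR hT hB).elim

end GP2Aux

namespace GP2Aux

lemma pt_eq_of_loc_zero (S : Square) (p : ℝ × ℝ) (hx : S.lx p = 0) (hy : S.ly p = 0) :
    p = S.center := by
  have h1 : (p.1 - S.center.1) * Real.cos S.θ + (p.2 - S.center.2) * Real.sin S.θ = 0 := hx
  have h2 : -(p.1 - S.center.1) * Real.sin S.θ + (p.2 - S.center.2) * Real.cos S.θ = 0 := hy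
  obtain ⟨z1, z2⟩ := eq_of_dot_eq_zero S.θ _ _ h1 h2
  rw [Prod.ext_iff]
  constructor <;> linarith

lemma toSet_zero (S : Square) (h : S.r = 0) : S.toSet = {S.center} := by
  ext p
  simp only [Square.toSet, Square.Mem, Set.mem_setOf_eq, Set.mem_singleton_iff, h]
  constructor
  · rintro ⟨h1, h2⟩
    exact pt_eq_of_loc_zero S p (abs_nonpos_iff.1 h1) (abs_nonpos_iff.1 h2)
  · rintro rfl
    constructor <;> simp [Square.lx, Square.ly]

lemma center_mem (P : Finset (ℝ × ℝ)) (S : Square)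
    (h4 : (contactPairs P S).ncard = 4) (h0 : S.r = 0) : S.center ∈ P := by
  have hne : (contactPairs P S).Nonempty := Set.nonempty_of_ncard_ne_zero (by omega)
  obtain ⟨⟨p, a⟩, hp, hOS⟩ := hne
  have hpc : p = S.center := by
    cases a
    · exact pt_eq_of_loc_zero S p (by have := hOS.2; rw [h0] at this; exact abs_nonpos_iff.1 this)
        (by rw [hOS.1, h0])
    · exact pt_eq_of_loc_zero S p (by rw [hOS.1, h0])
        (by have := hOS.2; rw [h0] at this; exact abs_nonpos_iff.1 this)
    · exact pt_eq_of_loc_zero S p (by have := hOS.2; rw [h0] at this; exact abs_nonpos_iff.1 this)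
        (by rw [hOS.1, h0]; ring)
    · exact pt_eq_of_loc_zero S p (by rw [hOS.1, h0]; ring)
        (by have := hOS.2; rw [h0] at this; exact abs_nonpos_iff.1 this)
  rwa [hpc] at hp

end GP2Aux


open GP2Aux

/-- Lemma GP2. If `P` is in general position, then there are
only finitely many empty squares among `P` having four contact pairs. -/
theorem genPos_finitely_many_4squares (P : Finset (ℝ × ℝ)) (hP : GenPos P) :
    ({X : Set (ℝ × ℝ) | ∃ S : Square, IsEmptySquare P S ∧
        (contactPairs P S).ncard = 4 ∧ X = S.toSet}).Finite := by
  classical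
  set Zp : Set Square := {S | S.Valid ∧ 0 < S.r ∧ (contactPairs P S).ncard = 4} with hZp
  have hZfin : Zp.Finite := by
    have himfin : ((fun S => contactPairs P S) '' Zp).Finite := by
      apply Set.Finite.subset (Set.Finite.finite_subsets
        (Set.Finite.prod P.finite_toSet (Set.finite_univ (α := SqSide))))
      rintro C ⟨S, _, rfl⟩
      intro x hx
      exact ⟨hx.1, Set.mem_univ _⟩
    apply Set.Finite.of_finite_image himfin
    intro S hS S' hS' hEq
    exact key_unique hP S S' hS.1 hS.2.1 hS'.1 hS'.2.1 hS.2.2 hEq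
  have hsub : {X : Set (ℝ × ℝ) | ∃ S : Square, IsEmptySquare P S ∧
      (contactPairs P S).ncard = 4 ∧ X = S.toSet} ⊆
      ((fun p => ({p} : Set (ℝ × ℝ))) '' ↑P) ∪ (Square.toSet '' Zp) := by
    rintro X ⟨S, hES, h4, rfl⟩
    rcases eq_or_lt_of_le hES.1.1 with h0 | hpos
    · left
      exact ⟨S.center, Finset.mem_coe.2 (center_mem P S h4 h0.symm),
        (toSet_zero S h0.symm).symm⟩
    · right
      exact ⟨S, ⟨hES.1, hpos, h4⟩, rfl⟩
  exact Set.Finite.subset (Set.Finite.union (P.finite_toSet.image _) (hZfin.image _)) hsub
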